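/- arXiv:2105.01222 — 4 statements merged into one kernel-verified Lean document; each statement's English description precedes it below -/
import Mathlib

section
/- Let (Ω, μ) be a finite measure space, let t ∈ (0, 1), and let ε > 0. Let w : Ω → [0, ∞) be a bounded measurable function. Suppose v_j ∈ L¹(μ) are nonnegative and converge weakly in L¹ to v ∈ L¹(μ), i.e. ∫ v_j φ dμ → ∫ v φ dμ for every bounded measurable φ : Ω → ℝ, and suppose v ≥ ε almost everywhere. Then limsup_j ∫ w v_j^t dμ ≤ ∫ w v^t dμ. -/
open Filter Topology MeasureTheory

private lemma rpow_tangent_le {a b t : ℝ} (ha : 0 ≤ a) (hb : 0 < b)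
    (ht0 : 0 ≤ t) (ht1 : t ≤ 1) :
    a ^ t ≤ b ^ t + t * b ^ (t - 1) * (a - b) := by
  set s : ℝ := a / b - 1 with hs
  have hab : 0 ≤ a / b := div_nonneg ha hb.le
  have hs1 : -1 ≤ s := by rw [hs]; linarith
  have key := rpow_one_add_le_one_add_mul_self hs1 ht0 ht1
  have h1 : 1 + s = a / b := by rw [hs]; ring
  rw [h1] at key
  have hbt : 0 < b ^ t := Real.rpow_pos_of_pos hb t
  have h2 : b ^ t * (a / b) ^ t = a ^ t := by
    rw [← Real.mul_rpow hb.le hab, mul_div_cancel₀ _ hb.ne']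
  have h3 : b ^ t * (1 + t * s) = b ^ t + t * b ^ (t - 1) * (a - b) := by
    rw [Real.rpow_sub hb, Real.rpow_one, hs]
    field_simp
  have := mul_le_mul_of_nonneg_left key hbt.le
  rw [h2] at this
  linarith [h3]

/-- If nonnegative `v_j → v` weakly in `L¹` on a finite measure space, `v ≥ ε > 0` a.e.,
`0 < t < 1` and `w ≥ 0` is bounded measurable, then `limsup ∫ w v_j^t ≤ ∫ w v^t`. -/
theorem limsup_integral_rpow_le
    {Ω : Type*} [MeasurableSpace Ω] (μ : Measure Ω) [IsFiniteMeasure μ]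
    (t ε : ℝ) (ht0 : 0 < t) (ht1 : t < 1) (hε : 0 < ε)
    (w : Ω → ℝ) (hwmeas : Measurable w) (hwnn : ∀ ω, 0 ≤ w ω)
    (hwbdd : ∃ M : ℝ, ∀ ω, w ω ≤ M)
    (v : ℕ → Ω → ℝ) (v₀ : Ω → ℝ)
    (hv : ∀ j, Integrable (v j) μ) (hvnn : ∀ j, 0 ≤ᵐ[μ] v j)
    (hv₀ : Integrable v₀ μ)
    (hweak : ∀ φ : Ω → ℝ, Measurable φ → (∃ M : ℝ, ∀ ω, |φ ω| ≤ M) →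
      Tendsto (fun j => ∫ ω, v j ω * φ ω ∂μ) atTop (𝓝 (∫ ω, v₀ ω * φ ω ∂μ)))
    (hv₀ε : ∀ᵐ ω ∂μ, ε ≤ v₀ ω) :
    limsup (fun j => ∫ ω, w ω * v j ω ^ t ∂μ) atTop ≤ ∫ ω, w ω * v₀ ω ^ t ∂μ := by
  obtain ⟨M₀, hM₀⟩ := hwbdd
  set M : ℝ := max M₀ 0 with hM
  have hMw : ∀ ω, w ω ≤ M := fun ω => (hM₀ ω).trans (le_max_left _ _)
  have hM0 : 0 ≤ M := le_max_right _ _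
  -- measurable modification of v₀
  set g : Ω → ℝ := hv₀.aestronglyMeasurable.mk v₀ with hg
  have hgmeas : Measurable g := hv₀.aestronglyMeasurable.stronglyMeasurable_mk.measurable
  have hgae : v₀ =ᵐ[μ] g := hv₀.aestronglyMeasurable.ae_eq_mk
  set u : Ω → ℝ := fun ω => max (g ω) ε with hu
  have humeas : Measurable u := hgmeas.max measurable_const
  have huε : ∀ ω, ε ≤ u ω := fun ω => le_max_right _ _
  have hupos : ∀ ω, 0 < u ω := fun ω => lt_of_lt_of_le hε (huε ω)
  have huae : u =ᵐ[μ] v₀ := by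
    filter_upwards [hgae, hv₀ε] with ω h1 h2
    rw [hu]; simp only [← h1]
    exact max_eq_left h2
  -- the bounded test function
  set φ : Ω → ℝ := fun ω => t * w ω * u ω ^ (t - 1) with hφ
  have hurw : (fun ω => u ω ^ (t - 1)) = fun ω => Real.exp (Real.log (u ω) * (t - 1)) :=
    funext fun ω => Real.rpow_def_of_pos (hupos ω) _
  have hφmeas : Measurable φ := by
    refine (measurable_const.mul hwmeas).mul ?_
    rw [hurw]
    exact Real.measurable_exp.comp ((Real.measurable_log.comp humeas).mul measurable_const)
  have hφnn : ∀ ω, 0 ≤ φ ω := fun ω =>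
    mul_nonneg (mul_nonneg ht0.le (hwnn ω)) (Real.rpow_pos_of_pos (hupos ω) _).le
  have hφbdd : ∀ ω, |φ ω| ≤ t * M * ε ^ (t - 1) := by
    intro ω
    rw [abs_of_nonneg (hφnn ω)]
    have h1 : u ω ^ (t - 1) ≤ ε ^ (t - 1) :=
      Real.rpow_le_rpow_of_nonpos hε (huε ω) (by linarith)
    have h2 : 0 ≤ u ω ^ (t - 1) := (Real.rpow_pos_of_pos (hupos ω) _).le
    have h3 : t * w ω ≤ t * M := mul_le_mul_of_nonneg_left (hMw ω) ht0.le
    have h4 : 0 ≤ t * w ω := mul_nonneg ht0.le (hwnn ω)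
    calc t * w ω * u ω ^ (t - 1) ≤ t * M * u ω ^ (t - 1) :=
          mul_le_mul_of_nonneg_right h3 h2
      _ ≤ t * M * ε ^ (t - 1) :=
          mul_le_mul_of_nonneg_left h1 (mul_nonneg ht0.le hM0)
  -- integrability facts
  have hint_wvt : ∀ (f : Ω → ℝ), Integrable f μ → (0 ≤ᵐ[μ] f) →
      Integrable (fun ω => w ω * f ω ^ t) μ := by
    intro f hf hfnn
    have hmeas : AEStronglyMeasurable (fun ω => w ω * f ω ^ t) μ :=
      hwmeas.aestronglyMeasurable.mul
        (((Real.continuous_rpow_const ht0.le).measurable.comp_aemeasurable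
          hf.aemeasurable).aestronglyMeasurable)
    refine Integrable.mono' ((integrable_const (M : ℝ)).add (hf.const_mul M)) hmeas ?_
    filter_upwards [hfnn] with ω hfω
    simp only [Pi.zero_apply] at hfω
    have hft : f ω ^ t ≤ 1 + f ω := by
      rcases le_or_gt (f ω) 1 with h | h
      · have : f ω ^ t ≤ 1 := Real.rpow_le_one hfω h ht0.le
        linarith
      · have : f ω ^ t ≤ f ω ^ (1 : ℝ) :=
          Real.rpow_le_rpow_of_exponent_le h.le ht1.le
        rw [Real.rpow_one] at this
        linarith
    have hftnn : 0 ≤ f ω ^ t := Real.rpow_nonneg hfω t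
    have : w ω * f ω ^ t ≤ M * (1 + f ω) :=
      mul_le_mul (hMw ω) hft hftnn hM0
    rw [Real.norm_eq_abs, abs_of_nonneg (mul_nonneg (hwnn ω) hftnn)]
    calc w ω * f ω ^ t ≤ M * (1 + f ω) := this
      _ = M + M * f ω := by ring
  have hI : ∀ j, Integrable (fun ω => w ω * v j ω ^ t) μ := fun j =>
    hint_wvt (v j) (hv j) (hvnn j)
  have hI0 : Integrable (fun ω => w ω * v₀ ω ^ t) μ :=
    hint_wvt v₀ hv₀ (hv₀ε.mono fun ω h => le_trans hε.le h)
  have hIφ : ∀ (f : Ω → ℝ), Integrable f μ → Integrable (fun ω => f ω * φ ω) μ := by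
    intro f hf
    have := hf.bdd_mul hφmeas.aestronglyMeasurable
      (c := t * M * ε ^ (t - 1)) (Eventually.of_forall fun ω => by rw [Real.norm_eq_abs]; exact hφbdd ω)
    simpa [mul_comm] using this
  -- pointwise a.e. inequality
  have hptwise : ∀ j, ∀ᵐ ω ∂μ, w ω * v j ω ^ t ≤
      w ω * v₀ ω ^ t + (v j ω * φ ω - v₀ ω * φ ω) := by
    intro j
    filter_upwards [hvnn j, hv₀ε, huae] with ω h1 h2 h3
    have hb : 0 < v₀ ω := lt_of_lt_of_le hε h2
    have key := rpow_tangent_le h1 hb ht0.le ht1.le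
    have hφω : φ ω = t * w ω * v₀ ω ^ (t - 1) := by
      show t * w ω * u ω ^ (t - 1) = _
      rw [h3]
    have := mul_le_mul_of_nonneg_left key (hwnn ω)
    calc w ω * v j ω ^ t
        ≤ w ω * (v₀ ω ^ t + t * v₀ ω ^ (t - 1) * (v j ω - v₀ ω)) := this
      _ = w ω * v₀ ω ^ t + (v j ω * φ ω - v₀ ω * φ ω) := by rw [hφω]; ring
  -- integral inequality
  have hintineq : ∀ j, ∫ ω, w ω * v j ω ^ t ∂μ ≤
      ∫ ω, w ω * v₀ ω ^ t ∂μ + ((∫ ω, v j ω * φ ω ∂μ) - ∫ ω, v₀ ω * φ ω ∂μ) := by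
    intro j
    have hsub : Integrable (fun ω => v j ω * φ ω - v₀ ω * φ ω) μ :=
      (hIφ (v j) (hv j)).sub (hIφ v₀ hv₀)
    have hR : Integrable (fun ω => w ω * v₀ ω ^ t + (v j ω * φ ω - v₀ ω * φ ω)) μ :=
      hI0.add hsub
    have := integral_mono_ae (hI j) hR (hptwise j)
    rwa [integral_add hI0 hsub, integral_sub (hIφ (v j) (hv j)) (hIφ v₀ hv₀)] at this
  -- the RHS tends to ∫ w v₀^t
  have hT : Tendsto (fun j => ∫ ω, w ω * v₀ ω ^ t ∂μ +
      ((∫ ω, v j ω * φ ω ∂μ) - ∫ ω, v₀ ω * φ ω ∂μ)) atTop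
      (𝓝 (∫ ω, w ω * v₀ ω ^ t ∂μ)) := by
    have h := hweak φ hφmeas ⟨t * M * ε ^ (t - 1), hφbdd⟩
    have h2 : Tendsto (fun j => ∫ ω, w ω * v₀ ω ^ t ∂μ +
        ((∫ ω, v j ω * φ ω ∂μ) - ∫ ω, v₀ ω * φ ω ∂μ)) atTop
        (𝓝 (∫ ω, w ω * v₀ ω ^ t ∂μ +
          ((∫ ω, v₀ ω * φ ω ∂μ) - ∫ ω, v₀ ω * φ ω ∂μ))) :=
      tendsto_const_nhds.add (h.sub tendsto_const_nhds)
    simpa using h2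
  -- conclude via limsup
  have hco : IsCoboundedUnder (· ≤ ·) atTop (fun j => ∫ ω, w ω * v j ω ^ t ∂μ) := by
    refine isCoboundedUnder_le_of_le atTop (x := 0) fun j => ?_
    refine integral_nonneg_of_ae ((hvnn j).mono fun ω h => ?_)
    simp only [Pi.zero_apply] at h
    exact mul_nonneg (hwnn ω) (Real.rpow_nonneg h t)
  have hbdd : IsBoundedUnder (· ≤ ·) atTop (fun j => ∫ ω, w ω * v₀ ω ^ t ∂μ +
      ((∫ ω, v j ω * φ ω ∂μ) - ∫ ω, v₀ ω * φ ω ∂μ)) := hT.isBoundedUnder_le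
  calc limsup (fun j => ∫ ω, w ω * v j ω ^ t ∂μ) atTop
      ≤ limsup (fun j => ∫ ω, w ω * v₀ ω ^ t ∂μ +
          ((∫ ω, v j ω * φ ω ∂μ) - ∫ ω, v₀ ω * φ ω ∂μ)) atTop :=
        limsup_le_limsup (Eventually.of_forall hintineq) hco hbdd
    _ = ∫ ω, w ω * v₀ ω ^ t ∂μ := hT.limsup_eq
end

section
/- For every real t with 0 ≤ t ≤ 1, the function (x, y) ↦ x²·y^{t−1} is convex on the convex set {(x, y) ∈ ℝ² : x ≥ 0, y > 0}. -/
/-- For `0 ≤ t ≤ 1`, the function `(x, y) ↦ x² · y^(t-1)` is convex on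
`{(x, y) : x ≥ 0, y > 0}`. -/
theorem convexOn_sq_mul_rpow (t : ℝ) (ht0 : 0 ≤ t) (ht1 : t ≤ 1) :
    ConvexOn ℝ {p : ℝ × ℝ | 0 ≤ p.1 ∧ 0 < p.2}
      (fun p : ℝ × ℝ => p.1 ^ 2 * p.2 ^ (t - 1)) := by
  set s : ℝ := 1 - t with hs
  have hs0 : 0 ≤ s := by linarith
  have hs1 : s ≤ 1 := by linarith
  constructor
  · intro p hp q hq a b ha hb hab
    refine ⟨by dsimp; nlinarith [hp.1, hq.1, mul_nonneg ha hp.1, mul_nonneg hb hq.1], ?_⟩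
    have hm : 0 < min p.2 q.2 := lt_min hp.2 hq.2
    have h1 : a * min p.2 q.2 ≤ a * p.2 :=
      mul_le_mul_of_nonneg_left (min_le_left _ _) ha
    have h2 : b * min p.2 q.2 ≤ b * q.2 :=
      mul_le_mul_of_nonneg_left (min_le_right _ _) hb
    have h3 : a * min p.2 q.2 + b * min p.2 q.2 = min p.2 q.2 := by
      rw [← add_mul, hab, one_mul]
    dsimp; linarith
  intro p hp q hq a b ha hb hab
  obtain ⟨hx1, hy1⟩ := hp
  obtain ⟨hx2, hy2⟩ := hq
  dsimp only
  rcases ha.eq_or_lt with rfl | ha'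
  · simp only [zero_smul, zero_add, zero_mul] at *
    have hb1 : b = 1 := by linarith
    subst hb1; simp
  rcases hb.eq_or_lt with rfl | hb'
  · simp only [zero_smul, add_zero, zero_mul] at *
    have ha1 : a = 1 := by linarith
    subst ha1; simp
  set x₁ := p.1; set y₁ := p.2; set x₂ := q.1; set y₂ := q.2
  have hY : (0:ℝ) < a * y₁ + b * y₂ := by positivity
  -- Step 1: concavity of z ↦ z^s
  have step1 : a * y₁ ^ s + b * y₂ ^ s ≤ (a * y₁ + b * y₂) ^ s := by
    have := (Real.concaveOn_rpow hs0 hs1).2 (Set.mem_Ici.2 hy1.le)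
      (Set.mem_Ici.2 hy2.le) ha hb hab
    simpa [smul_eq_mul] using this
  -- Step 2: Cauchy–Schwarz
  have step2 : (a • x₁ + b • x₂) ^ 2 ≤
      (a * (x₁ ^ 2 * y₁ ^ (t-1)) + b * (x₂ ^ 2 * y₂ ^ (t-1))) * (a * y₁ ^ s + b * y₂ ^ s) := by
    have q1 : (0:ℝ) < y₁ ^ s := Real.rpow_pos_of_pos hy1 _
    have q2 : (0:ℝ) < y₂ ^ s := Real.rpow_pos_of_pos hy2 _
    have hA1 : y₁ ^ (t-1) = (y₁ ^ s)⁻¹ := by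
      rw [show t - 1 = -s by rw [hs]; ring, Real.rpow_neg hy1.le]
    have hA2 : y₂ ^ (t-1) = (y₂ ^ s)⁻¹ := by
      rw [show t - 1 = -s by rw [hs]; ring, Real.rpow_neg hy2.le]
    rw [hA1, hA2]
    set B1 := y₁ ^ s
    set B2 := y₂ ^ s
    simp only [smul_eq_mul]
    have claim : (a * x₁ + b * x₂) ^ 2 * (B1 * B2) ≤
        (a * (x₁ ^ 2 * B1⁻¹) + b * (x₂ ^ 2 * B2⁻¹)) * (a * B1 + b * B2) * (B1 * B2) := by
      have e : (a * (x₁ ^ 2 * B1⁻¹) + b * (x₂ ^ 2 * B2⁻¹)) * (a * B1 + b * B2) * (B1 * B2)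
          = (a * x₁ ^ 2 * B2 + b * x₂ ^ 2 * B1) * (a * B1 + b * B2) := by
        field_simp
      rw [e]
      nlinarith [mul_nonneg (mul_nonneg ha hb) (sq_nonneg (x₁ * B2 - x₂ * B1))]
    exact le_of_mul_le_mul_right claim (mul_pos q1 q2)
  -- Combine
  have hYs : (0:ℝ) < (a * y₁ + b * y₂) ^ s := Real.rpow_pos_of_pos hY _
  have hA : (0:ℝ) ≤ a * (x₁ ^ 2 * y₁ ^ (t-1)) + b * (x₂ ^ 2 * y₂ ^ (t-1)) := by
    have p1 : (0:ℝ) ≤ y₁ ^ (t-1) := (Real.rpow_pos_of_pos hy1 _).le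
    have p2 : (0:ℝ) ≤ y₂ ^ (t-1) := (Real.rpow_pos_of_pos hy2 _).le
    positivity
  have hYinv : (a * y₁ + b * y₂) ^ (t-1) = ((a * y₁ + b * y₂) ^ s)⁻¹ := by
    rw [← Real.rpow_neg hY.le]; norm_num [hs]
  have hsmul : a • y₁ + b • y₂ = a * y₁ + b * y₂ := by simp [smul_eq_mul]
  calc (a • x₁ + b • x₂) ^ 2 * (a • y₁ + b • y₂) ^ (t-1)
      ≤ ((a * (x₁ ^ 2 * y₁ ^ (t-1)) + b * (x₂ ^ 2 * y₂ ^ (t-1))) * (a * y₁ ^ s + b * y₂ ^ s))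
        * (a * y₁ + b * y₂) ^ (t-1) := by
        rw [hsmul]
        exact mul_le_mul_of_nonneg_right step2 (Real.rpow_pos_of_pos hY _).le
    _ ≤ ((a * (x₁ ^ 2 * y₁ ^ (t-1)) + b * (x₂ ^ 2 * y₂ ^ (t-1))) * ((a * y₁ + b * y₂) ^ s))
        * (a * y₁ + b * y₂) ^ (t-1) := by
        have := mul_le_mul_of_nonneg_left step1 hA
        exact mul_le_mul_of_nonneg_right this (Real.rpow_pos_of_pos hY _).le
    _ = a * (x₁ ^ 2 * y₁ ^ (t-1)) + b * (x₂ ^ 2 * y₂ ^ (t-1)) := by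
        rw [hYinv, mul_assoc, mul_inv_cancel₀ hYs.ne', mul_one]
    _ = a • (x₁ ^ 2 * y₁ ^ (t-1)) + b • (x₂ ^ 2 * y₂ ^ (t-1)) := by simp [smul_eq_mul]
end

section
/- Let (Ω, μ) be a σ-finite measure space, 1 < q < ∞ with conjugate exponent q', and n a natural number. Let w_j, w ∈ L^q(μ; ℝⁿ) with ∫ ⟨w_j, g⟩ dμ → ∫ ⟨w, g⟩ dμ for every g ∈ L^{q'}(μ; ℝⁿ), and let v_j, v ∈ L¹(μ) be nonnegative with ∫ v_j φ dμ → ∫ v φ dμ for every bounded measurable φ : Ω → ℝ. Let Φ : [0, ∞) × [0, ∞) → [0, ∞) be continuous, convex, and nondecreasing in its first variable (for each fixed y ≥ 0). Then ∫ Φ(|w(ω)|, v(ω)) dμ(ω) ≤ liminf_j ∫ Φ(|w_j(ω)|, v_j(ω)) dμ(ω). -/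
open Filter Topology MeasureTheory ENNReal

lemma affine_minorant (Φ : ℝ × ℝ → ℝ)
    (hΦcont : ContinuousOn Φ (Set.Ici (0 : ℝ) ×ˢ Set.Ici (0 : ℝ)))
    (hΦconv : ConvexOn ℝ (Set.Ici (0 : ℝ) ×ˢ Set.Ici (0 : ℝ)) Φ)
    (hΦmono : ∀ y : ℝ, 0 ≤ y → ∀ x₁ x₂ : ℝ, 0 ≤ x₁ → x₁ ≤ x₂ → Φ (x₁, y) ≤ Φ (x₂, y))
    {x₀ y₀ : ℝ} (hx₀ : 0 ≤ x₀) (hy₀ : 0 ≤ y₀) {ε : ℝ} (hε : 0 < ε) :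
    ∃ a b c : ℝ, 0 ≤ a ∧ (∀ x y : ℝ, 0 ≤ x → 0 ≤ y → a*x + b*y + c ≤ Φ (x, y)) ∧
      Φ (x₀, y₀) - ε < a*x₀ + b*y₀ + c := by
  set Q : Set (ℝ × ℝ) := Set.Ici (0 : ℝ) ×ˢ Set.Ici (0 : ℝ) with hQ
  set Epi : Set ((ℝ × ℝ) × ℝ) := {z | z.1 ∈ Q ∧ Φ z.1 ≤ z.2} with hEpi
  have hconv : Convex ℝ Epi := hΦconv.convex_epigraph
  have hclosed : IsClosed Epi := by
    have h1 : ContinuousOn (fun z : (ℝ × ℝ) × ℝ => Φ z.1 - z.2) (Q ×ˢ (Set.univ : Set ℝ)) := by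
      apply ContinuousOn.sub
      · exact hΦcont.comp continuous_fst.continuousOn (fun z hz => hz.1)
      · exact continuous_snd.continuousOn
    have h2 : IsClosed (Q ×ˢ (Set.univ : Set ℝ)) :=
      ((isClosed_Ici.prod isClosed_Ici).prod isClosed_univ)
    have h3 := h1.preimage_isClosed_of_isClosed h2 isClosed_Iic (t := Set.Iic (0:ℝ))
    convert h3 using 1
    ext z
    simp only [hEpi, Set.mem_setOf_eq, Set.mem_inter_iff, Set.mem_prod, Set.mem_univ,
      Set.mem_preimage, Set.mem_Iic, and_true]
    constructor
    · rintro ⟨h, h'⟩; exact ⟨h, by linarith⟩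
    · rintro ⟨h, h'⟩; exact ⟨h, by linarith⟩
  have hpt : ((x₀, y₀), Φ (x₀, y₀) - ε) ∉ Epi := by
    rintro ⟨-, h⟩; simp at h; linarith
  obtain ⟨f, u, hfu, hsep⟩ := geometric_hahn_banach_point_closed hconv hclosed hpt
  set α := f (((1:ℝ), (0:ℝ)), (0:ℝ)) with hα
  set β := f (((0:ℝ), (1:ℝ)), (0:ℝ)) with hβ
  set γ := f (((0:ℝ), (0:ℝ)), (1:ℝ)) with hγ
  have hrep : ∀ x y t : ℝ, f ((x, y), t) = x*α + y*β + t*γ := by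
    intro x y t
    have : ((x, y), t) = x • (((1:ℝ), (0:ℝ)), (0:ℝ)) + y • (((0:ℝ), (1:ℝ)), (0:ℝ))
        + t • (((0:ℝ), (0:ℝ)), (1:ℝ)) := by
      simp [Prod.ext_iff]
    rw [this, map_add, map_add, f.map_smul, f.map_smul, f.map_smul, smul_eq_mul, smul_eq_mul,
      smul_eq_mul]
  have hmem : ((x₀, y₀), Φ (x₀, y₀)) ∈ Epi := ⟨⟨hx₀, hy₀⟩, le_refl _⟩
  have h1 : u < x₀*α + y₀*β + Φ (x₀, y₀) * γ := by
    have := hsep _ hmem; rwa [hrep] at this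
  have h2 : x₀*α + y₀*β + (Φ (x₀, y₀) - ε)*γ < u := by
    have := hfu; rwa [hrep] at this
  have hγpos : 0 < γ := by nlinarith
  have key : ∀ x y : ℝ, 0 ≤ x → 0 ≤ y →
      (-α/γ)*x + (-β/γ)*y + u/γ ≤ Φ (x, y) := by
    intro x y hx hy
    have hmem' : ((x, y), Φ (x, y)) ∈ Epi := ⟨⟨hx, hy⟩, le_refl _⟩
    have h3 : u < x*α + y*β + Φ (x, y) * γ := by
      have := hsep _ hmem'; rwa [hrep] at this
    have h4 : (-(α*x) - β*y + u)/γ ≤ Φ (x, y) := by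
      rw [div_le_iff₀ hγpos]; nlinarith
    calc (-α/γ)*x + (-β/γ)*y + u/γ = (-(α*x) - β*y + u)/γ := by ring
      _ ≤ Φ (x, y) := h4
  have keypt : Φ (x₀, y₀) - ε < (-α/γ)*x₀ + (-β/γ)*y₀ + u/γ := by
    have h4 : Φ (x₀, y₀) - ε < (-(α*x₀) - β*y₀ + u)/γ := by
      rw [lt_div_iff₀ hγpos]; nlinarith
    calc Φ (x₀, y₀) - ε < (-(α*x₀) - β*y₀ + u)/γ := h4
      _ = (-α/γ)*x₀ + (-β/γ)*y₀ + u/γ := by ring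
  set a := -α/γ
  set b := -β/γ
  set c := u/γ
  by_cases ha : 0 ≤ a
  · exact ⟨a, b, c, ha, key, keypt⟩
  · push_neg at ha
    refine ⟨0, b, c + a*x₀, le_refl 0, ?_, by linarith⟩
    intro x y hx hy
    rcases le_total x₀ x with h | h
    · have := key x₀ y hx₀ hy
      have := hΦmono y hy x₀ x hx₀ h
      linarith
    · have := key x y hx hy
      nlinarith

lemma affine_minorant_rat (Φ : ℝ × ℝ → ℝ)
    (hΦcont : ContinuousOn Φ (Set.Ici (0 : ℝ) ×ˢ Set.Ici (0 : ℝ)))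
    (hΦconv : ConvexOn ℝ (Set.Ici (0 : ℝ) ×ˢ Set.Ici (0 : ℝ)) Φ)
    (hΦmono : ∀ y : ℝ, 0 ≤ y → ∀ x₁ x₂ : ℝ, 0 ≤ x₁ → x₁ ≤ x₂ → Φ (x₁, y) ≤ Φ (x₂, y))
    {x₀ y₀ : ℝ} (hx₀ : 0 ≤ x₀) (hy₀ : 0 ≤ y₀) {ε : ℝ} (hε : 0 < ε) :
    ∃ a b c : ℚ, 0 ≤ (a:ℝ) ∧
      (∀ x y : ℝ, 0 ≤ x → 0 ≤ y → (a:ℝ)*x + (b:ℝ)*y + (c:ℝ) ≤ Φ (x, y)) ∧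
      Φ (x₀, y₀) - ε < (a:ℝ)*x₀ + (b:ℝ)*y₀ + (c:ℝ) := by
  obtain ⟨a, b, c, ha, hmin, hval⟩ :=
    affine_minorant Φ hΦcont hΦconv hΦmono hx₀ hy₀ (half_pos hε)
  set δ : ℝ := ε/(2*(x₀+y₀+1)) with hδdef
  have hδ : 0 < δ := by positivity
  -- rational a
  obtain ⟨aq, haq0, haq1, haq2⟩ : ∃ aq : ℚ, 0 ≤ (aq:ℝ) ∧ (aq:ℝ) ≤ a ∧ a - (aq:ℝ) ≤ δ := by
    rcases eq_or_lt_of_le ha with h | h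
    · exact ⟨0, by norm_num, by rw [← h]; norm_num, by rw [← h]; simpa using hδ.le⟩
    · obtain ⟨aq, h1, h2⟩ := exists_rat_btwn (show max 0 (a - δ) < a by
        rcases le_total 0 (a - δ) with h' | h'
        · rw [max_eq_right h']; linarith
        · rw [max_eq_left h']; exact h)
      refine ⟨aq, le_trans (le_max_left _ _) h1.le, h2.le, ?_⟩
      have := le_trans (le_max_right 0 (a - δ)) h1.le
      linarith
  obtain ⟨bq, hbq1, hbq2⟩ := exists_rat_btwn (show b - δ < b by linarith)
  obtain ⟨cq, hcq1, hcq2⟩ := exists_rat_btwn (show c - δ < c by linarith)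
  refine ⟨aq, bq, cq, haq0, ?_, ?_⟩
  · intro x y hx hy
    have := hmin x y hx hy
    nlinarith
  · have hδbound : δ*(x₀+y₀+1) = ε/2 := by
      rw [hδdef, div_mul_eq_mul_div, div_eq_div_iff (by positivity) (by norm_num)]; ring
    nlinarith

lemma exists_minorant_family (n : ℕ) (Φ : ℝ × ℝ → ℝ)
    (hΦcont : ContinuousOn Φ (Set.Ici (0 : ℝ) ×ˢ Set.Ici (0 : ℝ)))
    (hΦconv : ConvexOn ℝ (Set.Ici (0 : ℝ) ×ˢ Set.Ici (0 : ℝ)) Φ)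
    (hΦnn : ∀ x y : ℝ, 0 ≤ x → 0 ≤ y → 0 ≤ Φ (x, y))
    (hΦmono : ∀ y : ℝ, 0 ≤ y → ∀ x₁ x₂ : ℝ, 0 ≤ x₁ → x₁ ≤ x₂ → Φ (x₁, y) ≤ Φ (x₂, y)) :
    ∃ d : ℕ → (EuclideanSpace ℝ (Fin n)) × ℝ × ℝ,
      d 0 = 0 ∧
      (∀ k (x y : ℝ), 0 ≤ x → 0 ≤ y →
        ‖(d k).1‖*x + (d k).2.1*y + (d k).2.2 ≤ Φ (x, y)) ∧
      (∀ (p : EuclideanSpace ℝ (Fin n)) (y : ℝ), 0 ≤ y → ∀ ε : ℝ, 0 < ε →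
        ∃ k, Φ (‖p‖, y) - ε < inner ℝ (d k).1 p + (d k).2.1*y + (d k).2.2) := by
  classical
  set E := EuclideanSpace ℝ (Fin n)
  obtain ⟨D, hDc, hDd⟩ := TopologicalSpace.exists_countable_dense E
  set Good : E × ℝ × ℝ → Prop := fun t =>
    ∀ x y : ℝ, 0 ≤ x → 0 ≤ y → ‖t.1‖*x + t.2.1*y + t.2.2 ≤ Φ (x, y) with hGooddef
  set S : Set (E × ℝ × ℝ) := {t | (t.1 = 0 ∨ t.1 ∈ D) ∧ (∃ bq : ℚ, t.2.1 = (bq:ℝ)) ∧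
      (∃ cq : ℚ, t.2.2 = (cq:ℝ)) ∧ Good t} with hSdef
  have hScount : S.Countable := by
    have hsub : S ⊆ (insert 0 D) ×ˢ ((Set.range ((↑) : ℚ → ℝ)) ×ˢ
        (Set.range ((↑) : ℚ → ℝ))) := by
      rintro ⟨p, b, c⟩ ⟨h1, ⟨bq, hb⟩, ⟨cq, hc⟩, -⟩
      refine ⟨?_, ⟨bq, hb.symm⟩, ⟨cq, hc.symm⟩⟩
      rcases h1 with h | h
      · exact Or.inl h
      · exact Or.inr h
    exact Set.Countable.mono hsub
      ((hDc.insert 0).prod ((Set.countable_range _).prod (Set.countable_range _)))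
  have hSne : S.Nonempty := by
    refine ⟨(0, 0, 0), Or.inl rfl, ⟨0, by norm_num⟩, ⟨0, by norm_num⟩, ?_⟩
    intro x y hx hy
    simpa using hΦnn x y hx hy
  obtain ⟨d₀, hd₀⟩ := hScount.exists_eq_range hSne
  set d : ℕ → E × ℝ × ℝ := fun k => if k = 0 then 0 else d₀ (k - 1) with hddef
  have hdS : ∀ k, k ≠ 0 → d k ∈ S := by
    intro k hk
    simp only [hddef, if_neg hk]
    rw [hd₀]; exact Set.mem_range_self _
  refine ⟨d, by simp [hddef], ?_, ?_⟩
  · intro k x y hx hy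
    by_cases hk : k = 0
    · subst hk
      simp only [hddef, if_pos rfl]
      simpa using hΦnn x y hx hy
    · exact ((hdS k hk).2.2.2) x y hx hy
  · intro p y₀ hy₀ ε hε
    obtain ⟨a, b, c, ha0, hmin, hval⟩ :=
      affine_minorant_rat Φ hΦcont hΦconv hΦmono (norm_nonneg p) hy₀ (half_pos hε)
    -- find α with (α = 0 ∨ α ∈ D), ‖α‖ ≤ a, and a*‖p‖ - ε/2 < ⟪α, p⟫
    obtain ⟨α, hαD, hαnorm, hαval⟩ : ∃ α : E, (α = 0 ∨ α ∈ D) ∧ ‖α‖ ≤ (a:ℝ) ∧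
        (a:ℝ)*‖p‖ - ε/2 < inner ℝ α p := by
      rcases eq_or_lt_of_le ha0 with haz | hapos
      · exact ⟨0, Or.inl rfl, by rw [← haz]; simp, by
          rw [← haz]; simpa [inner_zero_left] using half_pos hε⟩
      rcases eq_or_ne p 0 with hp | hp
      · exact ⟨0, Or.inl rfl, by simpa using ha0, by
          simp [hp, inner_zero_right]; positivity⟩
      have hpn : (0:ℝ) < ‖p‖ := norm_pos_iff.mpr hp
      set r : ℝ := min ((a:ℝ)/2) (ε/(4*‖p‖+1)) with hrdef
      have hr0 : 0 < r := lt_min (by positivity) (by positivity)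
      have hra : r ≤ (a:ℝ)/2 := min_le_left _ _
      have hrε : r ≤ ε/(4*‖p‖+1) := min_le_right _ _
      set t : E := (((a:ℝ) - r)/‖p‖) • p with htdef
      have htnorm : ‖t‖ = (a:ℝ) - r := by
        rw [htdef, norm_smul]
        rw [Real.norm_eq_abs, abs_of_nonneg (div_nonneg (by linarith) (le_of_lt hpn))]
        field_simp
      obtain ⟨α, hαD⟩ := hDd.exists_dist_lt t hr0
      refine ⟨α, Or.inr hαD.1, ?_, ?_⟩
      · have : ‖α - t‖ < r := by rw [← dist_eq_norm']; exact hαD.2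
        calc ‖α‖ ≤ ‖t‖ + ‖α - t‖ := by
              have := norm_add_le t (α - t); simpa using this
          _ ≤ ((a:ℝ) - r) + r := by rw [htnorm]; linarith
          _ = (a:ℝ) := by ring
      · have htp : (inner ℝ t p : ℝ) = ((a:ℝ) - r)*‖p‖ := by
          rw [htdef, real_inner_smul_left, real_inner_self_eq_norm_mul_norm]
          field_simp
        have hdiff : |(inner ℝ (α - t) p : ℝ)| ≤ ‖α - t‖ * ‖p‖ := abs_real_inner_le_norm _ _
        have hdist : ‖α - t‖ < r := by rw [← dist_eq_norm']; exact hαD.2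
        have h5 : (inner ℝ α p : ℝ) = inner ℝ t p + inner ℝ (α - t) p := by
          rw [← inner_add_left, add_sub_cancel]
        have h6 : (inner ℝ (α - t) p : ℝ) ≥ -(r * ‖p‖) := by
          have := neg_abs_le (inner ℝ (α - t) p : ℝ)
          nlinarith [norm_nonneg (α - t)]
        have h7 : 2*(r*‖p‖) < ε/2 := by
          have : r*(4*‖p‖+1) ≤ ε := by
            rw [hrdef]
            calc min ((a:ℝ)/2) (ε/(4*‖p‖+1)) * (4*‖p‖+1) ≤ (ε/(4*‖p‖+1))*(4*‖p‖+1) := by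
                  apply mul_le_mul_of_nonneg_right hrε; positivity
              _ = ε := by field_simp
          nlinarith
        rw [h5, htp]
        nlinarith
    have hGoodα : Good (α, (b:ℝ), (c:ℝ)) := by
      intro x y hx hy
      have := hmin x y hx hy
      have : ‖α‖*x ≤ (a:ℝ)*x := mul_le_mul_of_nonneg_right hαnorm hx
      simp only []
      nlinarith [hmin x y hx hy]
    have hmem : (α, (b:ℝ), (c:ℝ)) ∈ S := ⟨hαD, ⟨b, rfl⟩, ⟨c, rfl⟩, hGoodα⟩
    rw [hd₀] at hmem
    obtain ⟨k, hk⟩ := hmem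
    refine ⟨k + 1, ?_⟩
    have hdk : d (k+1) = (α, (b:ℝ), (c:ℝ)) := by
      simp only [hddef, if_neg (Nat.succ_ne_zero k), Nat.add_sub_cancel]; exact hk
    rw [hdk]
    simp only []
    have hip : (a:ℝ)*‖p‖ - ε/2 < (inner ℝ α p : ℝ) := hαval
    linarith

/-- Polyconvexity lower semicontinuity lemma: if `w_j ⇀ w` weakly in `L^q(μ; ℝⁿ)`,
`v_j ⇀ v` weakly in `L¹(μ)` with `v_j ≥ 0`, and `Φ ≥ 0` is continuous, convex and
nondecreasing in its first variable, then
`∫ Φ(|w|, v) ≤ liminf ∫ Φ(|w_j|, v_j)`. -/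
theorem polyconvex_liminf
    {Ω : Type*} [MeasurableSpace Ω] (μ : Measure Ω) [SigmaFinite μ]
    (q q' : ℝ) (hq : 1 < q) (hqq' : 1 / q + 1 / q' = 1) (n : ℕ)
    (w : ℕ → Ω → EuclideanSpace ℝ (Fin n)) (w₀ : Ω → EuclideanSpace ℝ (Fin n))
    (hw : ∀ j, MemLp (w j) (ENNReal.ofReal q) μ)
    (hw₀ : MemLp w₀ (ENNReal.ofReal q) μ)
    (hwweak : ∀ g : Ω → EuclideanSpace ℝ (Fin n), MemLp g (ENNReal.ofReal q') μ →
      Tendsto (fun j => ∫ ω, inner ℝ (w j ω) (g ω) ∂μ) atTop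
        (𝓝 (∫ ω, (inner ℝ (w₀ ω) (g ω) : ℝ) ∂μ)))
    (v : ℕ → Ω → ℝ) (v₀ : Ω → ℝ)
    (hv : ∀ j, Integrable (v j) μ) (hvnn : ∀ j, 0 ≤ᵐ[μ] v j)
    (hv₀ : Integrable v₀ μ)
    (hvweak : ∀ φ : Ω → ℝ, Measurable φ → (∃ M : ℝ, ∀ ω, |φ ω| ≤ M) →
      Tendsto (fun j => ∫ ω, v j ω * φ ω ∂μ) atTop (𝓝 (∫ ω, v₀ ω * φ ω ∂μ)))
    (Φ : ℝ × ℝ → ℝ)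
    (hΦcont : ContinuousOn Φ (Set.Ici (0 : ℝ) ×ˢ Set.Ici (0 : ℝ)))
    (hΦconv : ConvexOn ℝ (Set.Ici (0 : ℝ) ×ˢ Set.Ici (0 : ℝ)) Φ)
    (hΦnn : ∀ x y : ℝ, 0 ≤ x → 0 ≤ y → 0 ≤ Φ (x, y))
    (hΦmono : ∀ y : ℝ, 0 ≤ y → ∀ x₁ x₂ : ℝ, 0 ≤ x₁ → x₁ ≤ x₂ → Φ (x₁, y) ≤ Φ (x₂, y)) :
    ∫⁻ ω, ENNReal.ofReal (Φ (‖w₀ ω‖, v₀ ω)) ∂μ ≤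
      liminf (fun j => ∫⁻ ω, ENNReal.ofReal (Φ (‖w j ω‖, v j ω)) ∂μ) atTop := by
  classical
  obtain ⟨d, hd0, hdgood, hddense⟩ := exists_minorant_family n Φ hΦcont hΦconv hΦnn hΦmono
  -- measurable representatives
  set W : Ω → EuclideanSpace ℝ (Fin n) := hw₀.1.mk w₀ with hWdef
  have hWmeas : Measurable W := hw₀.1.stronglyMeasurable_mk.measurable
  have hWae : w₀ =ᵐ[μ] W := hw₀.1.ae_eq_mk
  have hWq : MemLp W (ENNReal.ofReal q) μ := hw₀.ae_eq hWae
  set V : Ω → ℝ := hv₀.1.mk v₀ with hVdef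
  have hVmeas : Measurable V := hv₀.1.stronglyMeasurable_mk.measurable
  have hVae : v₀ =ᵐ[μ] V := hv₀.1.ae_eq_mk
  have hVint : Integrable V μ := hv₀.congr hVae
  -- V is a.e. nonnegative
  have hV0 : ∀ᵐ ω ∂μ, 0 ≤ V ω := by
    set Sneg : Set Ω := {ω | V ω < 0} with hSnegdef
    have hSmeas : MeasurableSet Sneg := measurableSet_lt hVmeas measurable_const
    set φ : Ω → ℝ := Sneg.indicator (fun _ => (1:ℝ)) with hφdef
    have hφmeas : Measurable φ := measurable_const.indicator hSmeas
    have hφbd : ∃ M : ℝ, ∀ ω, |φ ω| ≤ M := by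
      refine ⟨1, fun ω => ?_⟩
      by_cases h : ω ∈ Sneg <;> simp [hφdef, Set.indicator_of_mem, Set.indicator_of_notMem, h]
    have hrw : ∀ u : Ω → ℝ, (fun ω => u ω * φ ω) = Sneg.indicator u := by
      intro u; funext ω
      by_cases h : ω ∈ Sneg <;>
        simp [hφdef, Set.indicator_of_mem, Set.indicator_of_notMem, h]
    have htend := hvweak φ hφmeas hφbd
    simp only [hrw] at htend
    rw [integral_indicator hSmeas] at htend
    have hnn : ∀ j, 0 ≤ ∫ ω, Sneg.indicator (v j) ω ∂μ := by
      intro j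
      rw [integral_indicator hSmeas]
      exact setIntegral_nonneg_ae hSmeas ((hvnn j).mono fun ω h _ => h)
    have hlim : 0 ≤ ∫ ω in Sneg, v₀ ω ∂μ := ge_of_tendsto htend (Eventually.of_forall hnn)
    have hcongr : ∫ ω in Sneg, v₀ ω ∂μ = ∫ ω in Sneg, V ω ∂μ :=
      integral_congr_ae (ae_restrict_of_ae hVae)
    have hnegint : Integrable (fun ω => -V ω) (μ.restrict Sneg) := (hVint.restrict).neg
    have hneg_nonneg : 0 ≤ᵐ[μ.restrict Sneg] (fun ω => -V ω) :=
      (ae_restrict_mem hSmeas).mono fun ω h => by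
        simp only [hSnegdef, Set.mem_setOf_eq] at h
        simp only [Pi.zero_apply]; linarith
    have h1 : 0 ≤ ∫ ω in Sneg, (-V ω) ∂μ :=
      setIntegral_nonneg_ae hSmeas (ae_of_all μ fun ω (h : ω ∈ Sneg) => by
        simp only [hSnegdef, Set.mem_setOf_eq] at h; linarith)
    have hint0 : ∫ ω in Sneg, (-V ω) ∂μ = 0 := by
      have h2 := hlim
      rw [hcongr] at h2
      rw [integral_neg] at h1 ⊢
      linarith
    have hae0 := (integral_eq_zero_iff_of_nonneg_ae hneg_nonneg hnegint).mp hint0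
    have hfalse : ∀ᵐ ω ∂μ.restrict Sneg, False := by
      filter_upwards [hae0, ae_restrict_mem hSmeas] with ω h1 h2
      simp only [hSnegdef, Set.mem_setOf_eq] at h2
      simp only [Pi.zero_apply] at h1
      linarith
    have hmz : μ Sneg = 0 := by
      rw [← Measure.restrict_eq_zero, ← MeasureTheory.ae_eq_bot]
      exact Filter.eventually_false_iff_eq_bot.mp hfalse
    rw [ae_iff]
    convert hmz using 2
    ext ω; simp [hSnegdef, not_le]
  -- the affine functions composed with (W, V)
  set ψ : ℕ → Ω → ℝ := fun k ω => inner ℝ (d k).1 (W ω) + (d k).2.1 * V ω + (d k).2.2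
    with hψdef
  have hψmeas : ∀ k, Measurable (ψ k) := fun k =>
    ((measurable_const.inner hWmeas).add (hVmeas.const_mul _)).add measurable_const
  have hψ0 : ∀ ω, ψ 0 ω = 0 := by intro ω; simp [hψdef, hd0]
  have hψle : ∀ᵐ ω ∂μ, ∀ k, ψ k ω ≤ Φ (‖W ω‖, V ω) := by
    filter_upwards [hV0] with ω hV0ω
    intro k
    have h1 : (inner ℝ (d k).1 (W ω) : ℝ) ≤ ‖(d k).1‖ * ‖W ω‖ := real_inner_le_norm _ _
    have h2 := hdgood k (‖W ω‖) (V ω) (norm_nonneg _) hV0ω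
    simp only [hψdef]; linarith
  -- F N = max of first N+1 affine functions
  set F : ℕ → Ω → ℝ := fun N => (Finset.range (N+1)).sup' ⟨0, Finset.mem_range.mpr (Nat.succ_pos N)⟩ ψ
    with hFdef
  have hFapp : ∀ N ω, F N ω = (Finset.range (N+1)).sup'
      ⟨0, Finset.mem_range.mpr (Nat.succ_pos N)⟩ (fun k => ψ k ω) := by
    intro N ω; simp only [hFdef]; exact Finset.sup'_apply _ _ _
  have hFmeas : ∀ N, Measurable (F N) := fun N =>
    Finset.measurable_range_sup' (fun k _ => hψmeas k)
  have hF0 : ∀ N ω, 0 ≤ F N ω := by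
    intro N ω
    rw [hFapp]
    have := Finset.le_sup' (fun k => ψ k ω) (Finset.mem_range.mpr (Nat.succ_pos N))
    rw [hψ0] at this; exact this
  have hFmono : ∀ ω, Monotone fun N => F N ω := by
    intro ω N M hNM
    show F N ω ≤ F M ω
    rw [hFapp, hFapp]
    exact Finset.sup'_mono (fun k => ψ k ω)
      (Finset.range_subset_range.mpr (by omega)) ⟨0, Finset.mem_range.mpr (Nat.succ_pos N)⟩
  have hFle : ∀ᵐ ω ∂μ, ∀ N, F N ω ≤ Φ (‖W ω‖, V ω) := by
    filter_upwards [hψle] with ω hψleω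
    intro N
    rw [hFapp]
    exact Finset.sup'_le _ _ fun k _ => hψleω k
  -- pointwise sup identity
  have hFsup : ∀ᵐ ω ∂μ,
      (⨆ N, ENNReal.ofReal (F N ω)) = ENNReal.ofReal (Φ (‖W ω‖, V ω)) := by
    filter_upwards [hV0, hFle] with ω hV0ω hFleω
    refine le_antisymm (iSup_le fun N => ENNReal.ofReal_le_ofReal (hFleω N)) ?_
    refine ENNReal.le_of_forall_pos_le_add fun ε hε _ => ?_
    obtain ⟨k, hk⟩ := hddense (W ω) (V ω) hV0ω (ε:ℝ) (by exact_mod_cast hε)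
    have hk' : Φ (‖W ω‖, V ω) - (ε:ℝ) < ψ k ω := hk
    have hkF : ψ k ω ≤ F k ω := by
      rw [hFapp]; exact Finset.le_sup' (fun l => ψ l ω) (Finset.self_mem_range_succ k)
    have h1 : Φ (‖W ω‖, V ω) ≤ F k ω + (ε:ℝ) := by linarith
    calc ENNReal.ofReal (Φ (‖W ω‖, V ω)) ≤ ENNReal.ofReal (F k ω + (ε:ℝ)) :=
          ENNReal.ofReal_le_ofReal h1
      _ = ENNReal.ofReal (F k ω) + ENNReal.ofReal (ε:ℝ) :=
          ENNReal.ofReal_add (hF0 k ω) ε.coe_nonneg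
      _ ≤ (⨆ N, ENNReal.ofReal (F N ω)) + ε := by
          gcongr
          · exact le_iSup (fun N => ENNReal.ofReal (F N ω)) k
          · exact le_of_eq ENNReal.ofReal_coe_nnreal
  -- main estimate for truncations
  have hstep : ∀ N m, ∫⁻ ω, (spanningSets μ m).indicator
      (fun ω => ENNReal.ofReal (F N ω)) ω ∂μ ≤
      liminf (fun j => ∫⁻ ω, ENNReal.ofReal (Φ (‖w j ω‖, v j ω)) ∂μ) atTop := by
    intro N m
    set E : Set Ω := spanningSets μ m with hEdef
    have hEmeas : MeasurableSet E := measurableSet_spanningSets μ m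
    have hEfin : μ E < ⊤ := measure_spanningSets_lt_top μ m
    set K : Finset ℕ := Finset.range (N+1) with hKdef
    have hKne : K.Nonempty := ⟨0, Finset.mem_range.mpr (Nat.succ_pos N)⟩
    set B : ℕ → Set Ω := fun k => {ω | ∀ l ∈ K, ψ l ω ≤ ψ k ω} with hBdef
    have hBmeas : ∀ k, MeasurableSet (B k) := by
      intro k
      have : B k = ⋂ l ∈ K, {ω | ψ l ω ≤ ψ k ω} := by
        ext ω; simp [hBdef]
      rw [this]
      exact MeasurableSet.biInter (Set.to_countable _)
        (fun l _ => measurableSet_le (hψmeas l) (hψmeas k))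
    set A : ℕ → Set Ω := fun k => (E ∩ B k) \ ⋃ l ∈ Finset.range k, B l with hAdef
    have hAmeas : ∀ k, MeasurableSet (A k) := fun k =>
      (hEmeas.inter (hBmeas k)).diff
        (MeasurableSet.biUnion (Finset.range k).countable_toSet fun l _ => hBmeas l)
    have hAsub : ∀ k, A k ⊆ E := fun k ω h => h.1.1
    have hAfin : ∀ k, μ (A k) < ⊤ := fun k =>
      lt_of_le_of_lt (measure_mono (hAsub k)) hEfin
    have hAcover : ∀ ω, ω ∈ E → ∃ k ∈ K, ω ∈ A k ∧ ∀ l ∈ K, l ≠ k → ω ∉ A l := by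
      intro ω hω
      have hmax : ∃ k ∈ K, ω ∈ B k := by
        obtain ⟨k, hkK, hk⟩ := Finset.exists_mem_eq_sup' hKne (fun k => ψ k ω)
        exact ⟨k, hkK, fun l hl => hk ▸ Finset.le_sup' (fun k => ψ k ω) hl⟩
      obtain ⟨k₀, hk₀K, hk₀B⟩ := hmax
      set s : Finset ℕ := K.filter (fun k => ω ∈ B k) with hsdef
      have hsne : s.Nonempty := ⟨k₀, Finset.mem_filter.mpr ⟨hk₀K, hk₀B⟩⟩
      set km := s.min' hsne with hkmdef
      have hkmem : km ∈ s := s.min'_mem hsne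
      rw [hsdef, Finset.mem_filter] at hkmem
      obtain ⟨hkmK, hkmB⟩ := hkmem
      have hminle : ∀ l, l ∈ K → ω ∈ B l → km ≤ l := fun l h1 h2 =>
        Finset.min'_le s l (Finset.mem_filter.mpr ⟨h1, h2⟩)
      have hkmN : km < N + 1 := Finset.mem_range.mp hkmK
      refine ⟨km, hkmK, ⟨⟨hω, hkmB⟩, ?_⟩, ?_⟩
      · intro hmem
        obtain ⟨l, hl, hlB⟩ := Set.mem_iUnion₂.mp hmem
        have hlkm : l < km := Finset.mem_range.mp hl
        have hlK : l ∈ K := Finset.mem_range.mpr (by omega)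
        have := hminle l hlK hlB
        omega
      · intro l hlK hlne hmemA
        rcases Nat.lt_or_ge l km with h | h
        · have : km ≤ l := hminle l hlK hmemA.1.2
          omega
        · have hlgt : km < l := by omega
          exact hmemA.2 (Set.mem_iUnion₂.mpr ⟨km, Finset.mem_range.mpr hlgt, hkmB⟩)
    have hFA : ∀ k ∈ K, ∀ ω ∈ A k, F N ω = ψ k ω := by
      intro k hkK ω hωA
      have hkK' : k ∈ Finset.range (N+1) := hKdef ▸ hkK
      have h1 : ∀ l ∈ Finset.range (N+1), ψ l ω ≤ ψ k ω := fun l hl => hωA.1.2 l hl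
      rw [hFapp]
      exact le_antisymm (Finset.sup'_le _ _ h1) (Finset.le_sup' (fun k => ψ k ω) hkK')
    -- integrability on E of the vector functions
    haveI : Fact (μ E < ⊤) := ⟨hEfin⟩
    have hone_le : (1:ℝ≥0∞) ≤ ENNReal.ofReal q := by
      rw [ENNReal.one_le_ofReal]; linarith
    have hEint : ∀ (u : Ω → EuclideanSpace ℝ (Fin n)),
        MemLp u (ENNReal.ofReal q) μ → IntegrableOn u E μ := by
      intro u hu
      exact memLp_one_iff_integrable.mp (MemLp.mono_exponent (hu.restrict E) hone_le)
    have hw₀E : IntegrableOn w₀ E μ := hEint w₀ hw₀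
    have hWE : IntegrableOn W E μ := hEint W hWq
    have hwE : ∀ j, IntegrableOn (w j) E μ := fun j => hEint (w j) (hw j)
    -- integrability of the affine integrands on A k
    have hθint : ∀ k (u : Ω → EuclideanSpace ℝ (Fin n)) (vv : Ω → ℝ),
        IntegrableOn u E μ → Integrable vv μ →
        IntegrableOn (fun ω => (inner ℝ (d k).1 (u ω) : ℝ) + (d k).2.1 * vv ω + (d k).2.2)
          (A k) μ := by
      intro k u vv hu hvv
      haveI : Fact (μ (A k) < ⊤) := ⟨hAfin k⟩
      exact (((hu.mono_set (hAsub k)).const_inner _).add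
        ((hvv.restrict).const_mul _)).add (integrable_const _)
    -- splitting of the integral
    have hsplit : ∀ k (u : Ω → EuclideanSpace ℝ (Fin n)) (vv : Ω → ℝ),
        IntegrableOn u E μ → Integrable vv μ →
        ∫ ω in A k, ((inner ℝ (d k).1 (u ω) : ℝ) + (d k).2.1 * vv ω + (d k).2.2) ∂μ
        = (∫ ω in A k, (inner ℝ (d k).1 (u ω) : ℝ) ∂μ)
          + (d k).2.1 * (∫ ω in A k, vv ω ∂μ) + (d k).2.2 * (μ (A k)).toReal := by
      intro k u vv hu hvv
      haveI : Fact (μ (A k) < ⊤) := ⟨hAfin k⟩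
      have i1 : Integrable (fun ω => (inner ℝ (d k).1 (u ω) : ℝ)) (μ.restrict (A k)) :=
        (hu.mono_set (hAsub k)).const_inner _
      have i2 : Integrable (fun ω => (d k).2.1 * vv ω) (μ.restrict (A k)) :=
        (hvv.restrict).const_mul _
      have i12 : Integrable (fun ω => (inner ℝ (d k).1 (u ω) : ℝ) + (d k).2.1 * vv ω)
          (μ.restrict (A k)) := i1.add i2
      have i3 : Integrable (fun _ : Ω => (d k).2.2) (μ.restrict (A k)) := integrable_const _
      rw [integral_add i12 i3, integral_add i1 i2, integral_const_mul, integral_const]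
      simp [Measure.restrict_apply_univ, smul_eq_mul, mul_comm, measureReal_def]
    -- the weak convergences
    have hTw : ∀ k, Tendsto (fun j => ∫ ω in A k, (inner ℝ (d k).1 (w j ω) : ℝ) ∂μ) atTop
        (𝓝 (∫ ω in A k, (inner ℝ (d k).1 (w₀ ω) : ℝ) ∂μ)) := by
      intro k
      have hg : MemLp ((A k).indicator (fun _ => (d k).1)) (ENNReal.ofReal q') μ :=
        memLp_indicator_const _ (hAmeas k) _ (Or.inr (hAfin k).ne)
      have h2 : ∀ u : Ω → EuclideanSpace ℝ (Fin n),
          ∫ ω, (inner ℝ (u ω) ((A k).indicator (fun _ => (d k).1) ω) : ℝ) ∂μ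
          = ∫ ω in A k, (inner ℝ (d k).1 (u ω) : ℝ) ∂μ := by
        intro u
        rw [← integral_indicator (hAmeas k)]
        apply integral_congr_ae
        apply ae_of_all
        intro ω
        by_cases h : ω ∈ A k
        · simp [Set.indicator_of_mem h, real_inner_comm, mul_comm]
        · simp [Set.indicator_of_notMem h]
      have := hwweak _ hg
      rw [h2 w₀] at this
      exact (tendsto_congr fun j => h2 (w j)).mp this
    have hTv : ∀ k, Tendsto (fun j => ∫ ω in A k, v j ω ∂μ) atTop
        (𝓝 (∫ ω in A k, v₀ ω ∂μ)) := by
      intro k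
      have hφm : Measurable ((A k).indicator (fun _ => (1:ℝ))) :=
        measurable_const.indicator (hAmeas k)
      have hφb : ∃ M : ℝ, ∀ ω, |(A k).indicator (fun _ => (1:ℝ)) ω| ≤ M := by
        refine ⟨1, fun ω => ?_⟩
        by_cases h : ω ∈ A k <;>
          simp [Set.indicator_of_mem, Set.indicator_of_notMem, h]
      have h2 : ∀ u : Ω → ℝ,
          ∫ ω, u ω * (A k).indicator (fun _ => (1:ℝ)) ω ∂μ = ∫ ω in A k, u ω ∂μ := by
        intro u
        rw [← integral_indicator (hAmeas k)]
        apply integral_congr_ae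
        apply ae_of_all
        intro ω
        by_cases h : ω ∈ A k <;>
          simp [Set.indicator_of_mem, Set.indicator_of_notMem, h]
      have := hvweak _ hφm hφb
      rw [h2 v₀] at this
      exact (tendsto_congr fun j => h2 (v j)).mp this
    -- the approximating linear functional
    set I : (Ω → EuclideanSpace ℝ (Fin n)) → (Ω → ℝ) → ℝ := fun u vv =>
      ∑ k ∈ K, ∫ ω in A k, ((inner ℝ (d k).1 (u ω) : ℝ) + (d k).2.1 * vv ω + (d k).2.2) ∂μ
      with hIdef
    have hTend : Tendsto (fun j => I (w j) (v j)) atTop (𝓝 (I w₀ v₀)) := by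
      apply tendsto_finset_sum
      intro k _
      have heq : (fun j => ∫ ω in A k,
          ((inner ℝ (d k).1 (w j ω) : ℝ) + (d k).2.1 * v j ω + (d k).2.2) ∂μ)
          = fun j => (∫ ω in A k, (inner ℝ (d k).1 (w j ω) : ℝ) ∂μ)
            + (d k).2.1 * (∫ ω in A k, v j ω ∂μ) + (d k).2.2 * (μ (A k)).toReal :=
        funext fun j => hsplit k (w j) (v j) (hwE j) (hv j)
      rw [heq, hsplit k w₀ v₀ hw₀E hv₀]
      exact ((hTw k).add ((hTv k).const_mul _)).add tendsto_const_nhds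
    -- I as an integral of a sum of indicators
    have hIint : ∀ (u : Ω → EuclideanSpace ℝ (Fin n)) (vv : Ω → ℝ),
        IntegrableOn u E μ → Integrable vv μ →
        Integrable (fun ω => ∑ k ∈ K, (A k).indicator
          (fun ω => (inner ℝ (d k).1 (u ω) : ℝ) + (d k).2.1 * vv ω + (d k).2.2) ω) μ := by
      intro u vv hu hvv
      apply integrable_finset_sum
      intro k _
      exact (hθint k u vv hu hvv).integrable_indicator (hAmeas k)
    have hIeq : ∀ (u : Ω → EuclideanSpace ℝ (Fin n)) (vv : Ω → ℝ),
        IntegrableOn u E μ → Integrable vv μ →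
        I u vv = ∫ ω, (∑ k ∈ K, (A k).indicator
          (fun ω => (inner ℝ (d k).1 (u ω) : ℝ) + (d k).2.1 * vv ω + (d k).2.2) ω) ∂μ := by
      intro u vv hu hvv
      rw [integral_finset_sum K (fun k _ =>
        (hθint k u vv hu hvv).integrable_indicator (hAmeas k))]
      exact Finset.sum_congr rfl fun k _ => (integral_indicator (hAmeas k)).symm
    -- I w₀ v₀ equals the integral of the truncated F
    have hsum_eq : ∀ ω, (∑ k ∈ K, (A k).indicator
        (fun ω => (inner ℝ (d k).1 (W ω) : ℝ) + (d k).2.1 * V ω + (d k).2.2) ω)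
        = E.indicator (F N) ω := by
      intro ω
      by_cases hωE : ω ∈ E
      · obtain ⟨k₀, hk₀K, hk₀A, huniq⟩ := hAcover ω hωE
        rw [Set.indicator_of_mem hωE, Finset.sum_eq_single_of_mem k₀ hk₀K
          (fun l hl hne => Set.indicator_of_notMem (huniq l hl hne) _),
          Set.indicator_of_mem hk₀A, hFA k₀ hk₀K ω hk₀A]
      · rw [Set.indicator_of_notMem hωE, Finset.sum_eq_zero]
        intro k _
        exact Set.indicator_of_notMem (fun hmem => hωE (hAsub k hmem)) _
    have hIWV : I W V = ∫ ω, E.indicator (F N) ω ∂μ := by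
      rw [hIeq W V hWE hVint]
      exact integral_congr_ae (ae_of_all μ hsum_eq)
    have hIw₀ : I w₀ v₀ = I W V := by
      apply Finset.sum_congr rfl
      intro k _
      apply integral_congr_ae
      filter_upwards [ae_restrict_of_ae hWae, ae_restrict_of_ae hVae] with ω h1 h2
      rw [h1, h2]
    have hindint : Integrable (E.indicator (F N)) μ :=
      (hIint W V hWE hVint).congr (ae_of_all μ hsum_eq)
    have hindnn : 0 ≤ᵐ[μ] E.indicator (F N) :=
      ae_of_all μ fun ω => Set.indicator_nonneg (fun ω _ => hF0 N ω) ω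
    -- the left-hand side equals ofReal (I w₀ v₀)
    have hLHS : ∫⁻ ω, E.indicator (fun ω => ENNReal.ofReal (F N ω)) ω ∂μ
        = ENNReal.ofReal (I w₀ v₀) := by
      rw [hIw₀, hIWV, ofReal_integral_eq_lintegral_ofReal hindint hindnn]
      apply lintegral_congr
      intro ω
      by_cases h : ω ∈ E
      · rw [Set.indicator_of_mem h, Set.indicator_of_mem h]
      · rw [Set.indicator_of_notMem h, Set.indicator_of_notMem h, ENNReal.ofReal_zero]
    -- the bound for each j
    have hbound : ∀ j, ENNReal.ofReal (I (w j) (v j))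
        ≤ ∫⁻ ω, ENNReal.ofReal (Φ (‖w j ω‖, v j ω)) ∂μ := by
      intro j
      set h_j : Ω → ℝ := fun ω => ∑ k ∈ K, (A k).indicator
        (fun ω => (inner ℝ (d k).1 (w j ω) : ℝ) + (d k).2.1 * v j ω + (d k).2.2) ω
        with hhjdef
      have hjint : Integrable h_j μ := hIint (w j) (v j) (hwE j) (hv j)
      have hjle : ∀ᵐ ω ∂μ, h_j ω ≤ Φ (‖w j ω‖, v j ω) := by
        filter_upwards [hvnn j] with ω hvjω
        have hΦj : 0 ≤ Φ (‖w j ω‖, v j ω) := hΦnn _ _ (norm_nonneg _) hvjω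
        by_cases hωE : ω ∈ E
        · obtain ⟨k₀, hk₀K, hk₀A, huniq⟩ := hAcover ω hωE
          have heq : h_j ω = (inner ℝ (d k₀).1 (w j ω) : ℝ) + (d k₀).2.1 * v j ω
              + (d k₀).2.2 := by
            simp only [hhjdef]
            rw [Finset.sum_eq_single_of_mem k₀ hk₀K
              (fun l hl hne => Set.indicator_of_notMem (huniq l hl hne) _),
              Set.indicator_of_mem hk₀A]
          rw [heq]
          have h1 : (inner ℝ (d k₀).1 (w j ω) : ℝ) ≤ ‖(d k₀).1‖ * ‖w j ω‖ :=
            real_inner_le_norm _ _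
          have h2 := hdgood k₀ (‖w j ω‖) (v j ω) (norm_nonneg _) hvjω
          linarith
        · have heq : h_j ω = 0 := by
            rw [hhjdef]
            exact Finset.sum_eq_zero fun k _ =>
              Set.indicator_of_notMem (fun hmem => hωE (hAsub k hmem)) _
          rw [heq]; exact hΦj
      have e1 : I (w j) (v j) = ∫ ω, h_j ω ∂μ := hIeq (w j) (v j) (hwE j) (hv j)
      have e2 : ∫ ω, h_j ω ∂μ ≤ ∫ ω, max (h_j ω) 0 ∂μ :=
        integral_mono hjint hjint.pos_part (fun ω => le_max_left _ _)
      have e3 : ENNReal.ofReal (∫ ω, max (h_j ω) 0 ∂μ)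
          = ∫⁻ ω, ENNReal.ofReal (max (h_j ω) 0) ∂μ :=
        ofReal_integral_eq_lintegral_ofReal hjint.pos_part
          (ae_of_all μ fun ω => le_max_right _ _)
      have e4 : ∫⁻ ω, ENNReal.ofReal (max (h_j ω) 0) ∂μ
          = ∫⁻ ω, ENNReal.ofReal (h_j ω) ∂μ := by
        apply lintegral_congr
        intro ω
        rcases le_total (h_j ω) 0 with h | h
        · rw [max_eq_right h, ENNReal.ofReal_zero, ENNReal.ofReal_of_nonpos h]
        · rw [max_eq_left h]
      have e5 : ∫⁻ ω, ENNReal.ofReal (h_j ω) ∂μ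
          ≤ ∫⁻ ω, ENNReal.ofReal (Φ (‖w j ω‖, v j ω)) ∂μ :=
        lintegral_mono_ae (hjle.mono fun ω h => ENNReal.ofReal_le_ofReal h)
      calc ENNReal.ofReal (I (w j) (v j)) ≤ ENNReal.ofReal (∫ ω, max (h_j ω) 0 ∂μ) := by
            rw [e1]; exact ENNReal.ofReal_le_ofReal e2
        _ = ∫⁻ ω, ENNReal.ofReal (max (h_j ω) 0) ∂μ := e3
        _ = ∫⁻ ω, ENNReal.ofReal (h_j ω) ∂μ := e4
        _ ≤ ∫⁻ ω, ENNReal.ofReal (Φ (‖w j ω‖, v j ω)) ∂μ := e5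
    rw [hLHS]
    have : ENNReal.ofReal (I w₀ v₀)
        = liminf (fun j => ENNReal.ofReal (I (w j) (v j))) atTop :=
      (((ENNReal.continuous_ofReal.tendsto _).comp hTend).liminf_eq).symm
    rw [this]
    exact liminf_le_liminf (Eventually.of_forall hbound)
  -- put everything together
  have e1 : ∫⁻ ω, ENNReal.ofReal (Φ (‖w₀ ω‖, v₀ ω)) ∂μ
      = ∫⁻ ω, ENNReal.ofReal (Φ (‖W ω‖, V ω)) ∂μ := by
    apply lintegral_congr_ae
    filter_upwards [hWae, hVae] with ω h1 h2
    rw [h1, h2]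
  have e2 : ∫⁻ ω, ENNReal.ofReal (Φ (‖W ω‖, V ω)) ∂μ
      = ⨆ N, ∫⁻ ω, ENNReal.ofReal (F N ω) ∂μ := by
    rw [← lintegral_iSup' (fun N => ((hFmeas N).ennreal_ofReal).aemeasurable)
      (ae_of_all μ fun ω N M h => ENNReal.ofReal_le_ofReal (hFmono ω h))]
    exact lintegral_congr_ae (hFsup.mono fun ω h => h.symm)
  have e3 : ∀ N, ∫⁻ ω, ENNReal.ofReal (F N ω) ∂μ
      = ⨆ m, ∫⁻ ω, (spanningSets μ m).indicator
        (fun ω => ENNReal.ofReal (F N ω)) ω ∂μ := by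
    intro N
    rw [← lintegral_iSup' (fun m => (((hFmeas N).ennreal_ofReal).indicator
        (measurableSet_spanningSets μ m)).aemeasurable)
      (ae_of_all μ fun ω m m' h => Set.indicator_le_indicator_of_subset
        (monotone_spanningSets μ h) (fun _ => zero_le) ω)]
    apply lintegral_congr_ae
    apply ae_of_all
    intro ω
    obtain ⟨m, hm⟩ : ∃ m, ω ∈ spanningSets μ m := by
      have := iUnion_spanningSets μ
      have : ω ∈ ⋃ m, spanningSets μ m := by rw [this]; trivial
      exact Set.mem_iUnion.mp this
    refine le_antisymm (le_iSup_of_le m ?_) (iSup_le fun m' => Set.indicator_le_self _ _ ω)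
    rw [Set.indicator_of_mem hm]
  rw [e1, e2]
  refine iSup_le fun N => ?_
  rw [e3 N]
  exact iSup_le fun m => hstep N m
end

section
/- Let (Ω, μ) be a finite measure space, 1 < p < ∞ with conjugate exponent p', and let 0 < c ≤ C be constants. Suppose Ψ_j ∈ L^p(μ) are nonnegative and converge weakly in L^p(μ) to Ψ, i.e. ∫ Ψ_j g dμ → ∫ Ψ g dμ for every g ∈ L^{p'}(μ); suppose Φ : Ω → [0, ∞) is measurable with ∫_A Φ dμ ≤ liminf_j ∫_A Ψ_j dμ for every measurable set A ⊆ Ω; suppose η_j, η : Ω → ℝ are measurable with c ≤ η_j ≤ C and c ≤ η ≤ C almost everywhere, η_j → η uniformly on Ω, and lim_j ∫ Ψ_j^p η_j dμ = ∫ Φ^p η dμ < ∞. Then Φ = Ψ μ-almost everywhere and Ψ_j → Φ strongly in L^p(μ), i.e. ‖Ψ_j − Φ‖_{L^p} → 0. -/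
open Filter Topology MeasureTheory ENNReal

section Helpers

variable {Ω : Type*} [MeasurableSpace Ω] {μ : Measure Ω}

lemma memLp_of_integrable_abs_rpow {f : Ω → ℝ} {r : ℝ} (hr : 0 < r)
    (hf : AEStronglyMeasurable f μ) (hint : Integrable (fun ω => |f ω| ^ r) μ) :
    MemLp f (ENNReal.ofReal r) μ := by
  have hq0 : ENNReal.ofReal r ≠ 0 := by simp [hr, hr.not_ge, ENNReal.ofReal_eq_zero]
  have h := memLp_norm_rpow_iff (p := ENNReal.ofReal r) (q := ENNReal.ofReal r) hf hq0
    ofReal_ne_top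
  rw [ENNReal.div_self hq0 ofReal_ne_top, ENNReal.toReal_ofReal hr.le] at h
  rw [← h, memLp_one_iff_integrable]
  exact hint.congr (by filter_upwards with ω using by rw [Real.norm_eq_abs])

lemma integrable_abs_rpow_of_memLp {f : Ω → ℝ} {r : ℝ} (hr : 0 < r)
    (hf : MemLp f (ENNReal.ofReal r) μ) :
    Integrable (fun ω => |f ω| ^ r) μ := by
  have hq0 : ENNReal.ofReal r ≠ 0 := by simp [hr, hr.not_ge, ENNReal.ofReal_eq_zero]
  have := hf.integrable_norm_rpow hq0 ofReal_ne_top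
  rw [ENNReal.toReal_ofReal hr.le] at this
  exact this.congr (by filter_upwards with ω using by rw [Real.norm_eq_abs])

lemma integrable_mul_bdd {f w : Ω → ℝ} {C : ℝ} (hf : Integrable f μ)
    (hw : AEStronglyMeasurable w μ) (hwb : ∀ᵐ ω ∂μ, |w ω| ≤ C) :
    Integrable (fun ω => f ω * w ω) μ := by
  refine Integrable.mono' (hf.norm.const_mul C) (hf.aestronglyMeasurable.mul hw) ?_
  filter_upwards [hwb] with ω h
  rw [norm_mul]
  calc ‖f ω‖ * ‖w ω‖ ≤ ‖f ω‖ * C :=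
        mul_le_mul_of_nonneg_left (by rwa [Real.norm_eq_abs]) (norm_nonneg _)
    _ = C * ‖f ω‖ := mul_comm _ _

lemma integrable_mul_memLp {p q : ℝ} (hpq : Real.HolderConjugate p q) {f g : Ω → ℝ}
    (hf : MemLp f (ENNReal.ofReal p) μ) (hg : MemLp g (ENNReal.ofReal q) μ) :
    Integrable (fun ω => f ω * g ω) μ := by
  have := hpq.ennrealOfReal
  exact hf.integrable_mul hg

lemma memLp_rpow_weight {p p' : ℝ} (hpq : Real.HolderConjugate p p') {f w : Ω → ℝ} {C : ℝ}
    (hf : AEStronglyMeasurable f μ) (hw : AEStronglyMeasurable w μ)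
    (hf0 : 0 ≤ᵐ[μ] f) (hwb : ∀ᵐ ω ∂μ, |w ω| ≤ C)
    (hfp : Integrable (fun ω => f ω ^ p) μ) :
    MemLp (fun ω => f ω ^ (p - 1) * w ω) (ENNReal.ofReal p') μ := by
  have hp'0 : 0 < p' := hpq.symm.pos
  set C' := max C 0 with hC'
  have hC'0 : 0 ≤ C' := le_max_right C 0
  apply memLp_of_integrable_abs_rpow hp'0
    ((hf.aemeasurable.pow aemeasurable_const).mul hw.aemeasurable).aestronglyMeasurable
  refine Integrable.mono' (hfp.const_mul (C' ^ p'))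
    ((((measurable_abs.comp_aemeasurable
      ((hf.aemeasurable.pow aemeasurable_const).mul hw.aemeasurable))).pow
      aemeasurable_const).aestronglyMeasurable) ?_
  filter_upwards [hf0, hwb] with ω h0 hb
  rw [Real.norm_eq_abs, abs_of_nonneg (Real.rpow_nonneg (abs_nonneg _) _)]
  have h1 : |f ω ^ (p - 1) * w ω| ≤ f ω ^ (p - 1) * C' := by
    rw [abs_mul, abs_of_nonneg (Real.rpow_nonneg h0 _)]
    exact mul_le_mul_of_nonneg_left (hb.trans (le_max_left _ _)) (Real.rpow_nonneg h0 _)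
  refine (Real.rpow_le_rpow (abs_nonneg _) h1 hp'0.le).trans (le_of_eq ?_)
  rw [Real.mul_rpow (Real.rpow_nonneg h0 _) hC'0, ← Real.rpow_mul h0, hpq.sub_one_mul_conj]
  ring

/-- Weighted Hölder inequality. -/
lemma weighted_holder {p q : ℝ} (hpq : p.HolderConjugate q) {f g w : Ω → ℝ}
    (hf : AEStronglyMeasurable f μ) (hg : AEStronglyMeasurable g μ)
    (hw : AEStronglyMeasurable w μ)
    (hf0 : 0 ≤ᵐ[μ] f) (hg0 : 0 ≤ᵐ[μ] g) (hw0 : 0 ≤ᵐ[μ] w)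
    (hfp : Integrable (fun ω => f ω ^ p * w ω) μ)
    (hgq : Integrable (fun ω => g ω ^ q * w ω) μ) :
    ∫ ω, f ω * g ω * w ω ∂μ ≤
      (∫ ω, f ω ^ p * w ω ∂μ) ^ (1 / p) * (∫ ω, g ω ^ q * w ω ∂μ) ^ (1 / q) := by
  set F : Ω → ℝ := fun ω => f ω * w ω ^ (1 / p) with hF
  set G : Ω → ℝ := fun ω => g ω * w ω ^ (1 / q) with hG
  have hFm : AEStronglyMeasurable F μ :=
    (hf.aemeasurable.mul (hw.aemeasurable.pow aemeasurable_const)).aestronglyMeasurable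
  have hGm : AEStronglyMeasurable G μ :=
    (hg.aemeasurable.mul (hw.aemeasurable.pow aemeasurable_const)).aestronglyMeasurable
  have hF0 : 0 ≤ᵐ[μ] F := by
    filter_upwards [hf0, hw0] with ω h1 h2
    exact mul_nonneg h1 (Real.rpow_nonneg h2 _)
  have hG0 : 0 ≤ᵐ[μ] G := by
    filter_upwards [hg0, hw0] with ω h1 h2
    exact mul_nonneg h1 (Real.rpow_nonneg h2 _)
  have hFp : ∀ᵐ ω ∂μ, F ω ^ p = f ω ^ p * w ω := by
    filter_upwards [hf0, hw0] with ω h1 h2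
    rw [hF, Real.mul_rpow h1 (Real.rpow_nonneg h2 _), ← Real.rpow_mul h2, one_div,
      inv_mul_cancel₀ hpq.ne_zero, Real.rpow_one]
  have hGq : ∀ᵐ ω ∂μ, G ω ^ q = g ω ^ q * w ω := by
    filter_upwards [hg0, hw0] with ω h1 h2
    rw [hG, Real.mul_rpow h1 (Real.rpow_nonneg h2 _), ← Real.rpow_mul h2, one_div,
      inv_mul_cancel₀ hpq.symm.ne_zero, Real.rpow_one]
  have hFG : ∀ᵐ ω ∂μ, F ω * G ω = f ω * g ω * w ω := by
    filter_upwards [hw0] with ω h2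
    have : w ω ^ (1 / p) * w ω ^ (1 / q) = w ω := by
      rw [← Real.rpow_add' h2 (by rw [one_div, one_div, hpq.inv_add_inv_eq_one]; exact one_ne_zero),
        one_div, one_div, hpq.inv_add_inv_eq_one, Real.rpow_one]
    calc F ω * G ω = f ω * g ω * (w ω ^ (1/p) * w ω ^ (1/q)) := by ring
    _ = f ω * g ω * w ω := by rw [this]
  have hFmem : MemLp F (ENNReal.ofReal p) μ := by
    refine memLp_of_integrable_abs_rpow hpq.pos hFm (hfp.congr ?_)
    filter_upwards [hFp, hF0] with ω h1 h0
    rw [abs_of_nonneg h0, h1]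
  have hGmem : MemLp G (ENNReal.ofReal q) μ := by
    refine memLp_of_integrable_abs_rpow hpq.symm.pos hGm (hgq.congr ?_)
    filter_upwards [hGq, hG0] with ω h1 h0
    rw [abs_of_nonneg h0, h1]
  have H := MeasureTheory.integral_mul_le_Lp_mul_Lq_of_nonneg hpq hF0 hG0 hFmem hGmem
  calc ∫ ω, f ω * g ω * w ω ∂μ = ∫ ω, F ω * G ω ∂μ :=
        (integral_congr_ae hFG).symm
    _ ≤ (∫ ω, F ω ^ p ∂μ) ^ (1 / p) * (∫ ω, G ω ^ q ∂μ) ^ (1 / q) := H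
    _ = (∫ ω, f ω ^ p * w ω ∂μ) ^ (1 / p) * (∫ ω, g ω ^ q * w ω ∂μ) ^ (1 / q) := by
        rw [integral_congr_ae hFp, integral_congr_ae hGq]

lemma rpow_midpoint_le {p : ℝ} (hp : 1 < p) {a b : ℝ} (ha : 0 ≤ a) (hb : 0 ≤ b) :
    ((a + b) / 2) ^ p ≤ (a ^ p + b ^ p) / 2 := by
  have hcv := (strictConvexOn_rpow hp).convexOn
  have h := hcv.2 (Set.mem_Ici.2 ha) (Set.mem_Ici.2 hb)
    (by norm_num : (0:ℝ) ≤ 1/2) (by norm_num : (0:ℝ) ≤ 1/2) (by norm_num)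
  have h' : ((1/2:ℝ)*a + (1/2)*b) ^ p ≤ (1/2)*a^p + (1/2)*b^p := by simpa using h
  have e : (a+b)/2 = (1/2:ℝ)*a + (1/2)*b := by ring
  rw [e]; linarith

lemma key_pointwise_ineq {p : ℝ} (hp : 1 < p) {ε : ℝ} (hε : 0 < ε) :
    ∃ K : ℝ, 0 ≤ K ∧ ∀ a b : ℝ, 0 ≤ a → 0 ≤ b →
      |a - b| ^ p ≤ ε * (a ^ p + b ^ p) + K * ((a ^ p + b ^ p) / 2 - ((a + b) / 2) ^ p) := by
  have hp0 : (0:ℝ) < p := lt_trans one_pos hp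
  have hrc : Continuous fun t : ℝ => t ^ p := by
    rw [continuous_iff_continuousAt]
    exact fun x => Real.continuousAt_rpow_const x p (Or.inr hp0.le)
  set L : ℝ → ℝ := fun a => |2*a - 2| ^ p with hLdef
  set G : ℝ → ℝ := fun a => (a ^ p + (2 - a) ^ p) / 2 - 1 with hGdef
  have hLcont : Continuous L :=
    hrc.comp ((continuous_const.mul continuous_id).sub continuous_const).abs
  have hGcont : Continuous G :=
    ((hrc.add (hrc.comp (continuous_const.sub continuous_id))).div_const 2).sub continuous_const
  have hLnn : ∀ a, 0 ≤ L a := fun a => Real.rpow_nonneg (abs_nonneg _) _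
  have hGnonneg : ∀ a, 0 ≤ a → a ≤ 2 → 0 ≤ G a := by
    intro a h0 h2
    have := rpow_midpoint_le hp h0 (by linarith : (0:ℝ) ≤ 2 - a)
    have e : (a + (2 - a))/2 = (1:ℝ) := by ring
    rw [e, Real.one_rpow] at this
    simp only [hGdef]; linarith
  have hGpos : ∀ a, 0 ≤ a → a ≤ 2 → a ≠ 1 → 0 < G a := by
    intro a h0 h2 h1
    have hsc := strictConvexOn_rpow hp
    have hne : a ≠ 2 - a := fun h => h1 (by linarith)
    have h := hsc.2 (Set.mem_Ici.2 h0) (Set.mem_Ici.2 (by linarith : (0:ℝ) ≤ 2 - a)) hne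
      (by norm_num : (0:ℝ) < 1/2) (by norm_num : (0:ℝ) < 1/2) (by norm_num)
    have h' : ((1/2:ℝ)*a + (1/2)*(2-a)) ^ p < (1/2)*a^p + (1/2)*(2-a)^p := by simpa using h
    have e : (1/2:ℝ)*a + (1/2)*(2-a) = 1 := by ring
    rw [e, Real.one_rpow] at h'
    simp only [hGdef]; linarith
  have hL1 : L 1 = 0 := by
    simp only [hLdef]
    norm_num [Real.zero_rpow hp0.ne']
  obtain ⟨δ, hδ0, hδ⟩ : ∃ δ > 0, ∀ a, |a - 1| < δ → L a < 2*ε := by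
    have hca := hLcont.continuousAt (x := (1:ℝ))
    rw [Metric.continuousAt_iff] at hca
    obtain ⟨δ, hδ0, h⟩ := hca (2*ε) (by linarith)
    refine ⟨δ, hδ0, fun a ha => ?_⟩
    have h2 := h (x := a) (by simpa [Real.dist_eq] using ha)
    rw [Real.dist_eq, hL1, sub_zero] at h2
    exact lt_of_le_of_lt (le_abs_self _) h2
  set S : Set ℝ := Set.Icc 0 2 ∩ {a | δ ≤ |a - 1|} with hSdef
  have hScomp : IsCompact S := isCompact_Icc.inter_right
    (isClosed_le continuous_const (continuous_id.sub continuous_const).abs)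
  obtain ⟨K, hK0, hclaim⟩ : ∃ K : ℝ, 0 ≤ K ∧ ∀ a, 0 ≤ a → a ≤ 2 → L a ≤ 2*ε + K * G a := by
    by_cases hS : S.Nonempty
    · obtain ⟨a₀, ha₀S, hmin⟩ := hScomp.exists_isMinOn hS hGcont.continuousOn
      obtain ⟨a₁, ha₁S, hmax⟩ := hScomp.exists_isMaxOn hS hLcont.continuousOn
      have ha₀ne : a₀ ≠ 1 := by
        intro h
        have := ha₀S.2
        rw [h] at this
        simp only [Set.mem_setOf_eq, sub_self, abs_zero] at this
        linarith
      have hm : 0 < G a₀ := hGpos a₀ ha₀S.1.1 ha₀S.1.2 ha₀ne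
      refine ⟨L a₁ / G a₀, div_nonneg (hLnn _) hm.le, fun a h0 h2 => ?_⟩
      by_cases hnear : |a - 1| < δ
      · have hlt := hδ a hnear
        have hGa : 0 ≤ G a := hGnonneg a h0 h2
        have : 0 ≤ L a₁ / G a₀ * G a := mul_nonneg (div_nonneg (hLnn _) hm.le) hGa
        linarith
      · have haS : a ∈ S := ⟨⟨h0, h2⟩, not_lt.1 hnear⟩
        have h1 : L a ≤ L a₁ := (isMaxOn_iff.1 hmax) a haS
        have h2' : G a₀ ≤ G a := (isMinOn_iff.1 hmin) a haS
        have hstep : L a₁ / G a₀ * G a₀ ≤ L a₁ / G a₀ * G a :=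
          mul_le_mul_of_nonneg_left h2' (div_nonneg (hLnn _) hm.le)
        rw [div_mul_cancel₀ _ hm.ne'] at hstep
        linarith
    · refine ⟨0, le_refl 0, fun a h0 h2 => ?_⟩
      have hnear : |a - 1| < δ := by
        by_contra h
        exact hS ⟨a, ⟨h0, h2⟩, not_lt.1 h⟩
      have := hδ a hnear
      linarith
  refine ⟨K, hK0, fun a b ha hb => ?_⟩
  set s := (a + b) / 2 with hs
  rcases eq_or_lt_of_le (by positivity : (0:ℝ) ≤ s) with hs0 | hs0
  · have ha0 : a = 0 := by rw [hs] at hs0; linarith [hs0]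
    have hb0 : b = 0 := by rw [hs] at hs0; linarith [hs0]
    subst ha0; subst hb0
    norm_num [Real.zero_rpow hp0.ne']
  · have h2 : a / s ≤ 2 := by rw [div_le_iff₀ hs0]; rw [hs]; linarith
    have h0 : 0 ≤ a / s := div_nonneg ha hs0.le
    have hcl := hclaim (a/s) h0 h2
    simp only [hLdef, hGdef] at hcl
    have ebs : 2 - a/s = b/s := by
      field_simp
      rw [hs]; ring
    rw [ebs] at hcl
    have hsp : 0 < s ^ p := Real.rpow_pos_of_pos hs0 p
    have eabs : s * |2*(a/s) - 2| = |a - b| := by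
      have e1 : 2*(a/s) - 2 = (a - b)/s := by
        field_simp
        rw [hs]; ring
      rw [e1, abs_div, abs_of_pos hs0, mul_comm, div_mul_cancel₀ _ hs0.ne']
    have eL : s ^ p * |2*(a/s) - 2| ^ p = |a - b| ^ p := by
      rw [← Real.mul_rpow hs0.le (abs_nonneg _), eabs]
    have ea : s ^ p * (a/s) ^ p = a ^ p := by
      rw [← Real.mul_rpow hs0.le h0]
      congr 1
      field_simp
    have eb : s ^ p * (b/s) ^ p = b ^ p := by
      rw [← Real.mul_rpow hs0.le (div_nonneg hb hs0.le)]
      congr 1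
      field_simp
    have emid : s ^ p ≤ (a^p + b^p)/2 := by
      rw [hs]; exact rpow_midpoint_le hp ha hb
    have hmul := mul_le_mul_of_nonneg_left hcl hsp.le
    have expand : s^p * (2*ε + K*(((a/s)^p + (b/s)^p)/2 - 1)) =
        2*ε*(s^p) + K*((s^p*((a/s)^p) + s^p*((b/s)^p))/2 - s^p) := by ring
    rw [expand, ea, eb, eL] at hmul
    have hεs : 2*ε*(s^p) ≤ ε*(a^p + b^p) := by nlinarith
    linarith

end Helpers

/-- Weighted version (Theorem 2 abstraction): with weights `c ≤ η_j, η ≤ C`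
converging uniformly, weak `L^p` convergence of nonnegative `Ψ_j` to `Ψ`,
the liminf inequality for `Φ`, and convergence of the weighted `p`-energies
`∫ Ψ_j^p η_j → ∫ Φ^p η`, one gets `Φ = Ψ` a.e. and `Ψ_j → Φ` strongly in `L^p`. -/
theorem weighted_weak_limit_strong_convergence
    {Ω : Type*} [MeasurableSpace Ω] (μ : Measure Ω) [IsFiniteMeasure μ]
    (p p' : ℝ) (hp : 1 < p) (hpp' : 1 / p + 1 / p' = 1)
    (c C : ℝ) (hc : 0 < c) (hcC : c ≤ C)
    (Ψseq : ℕ → Ω → ℝ) (Ψ Φ : Ω → ℝ)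
    (hΨmem : ∀ j, MemLp (Ψseq j) (ENNReal.ofReal p) μ)
    (hΨnn : ∀ j, 0 ≤ᵐ[μ] Ψseq j)
    (hΨlim : MemLp Ψ (ENNReal.ofReal p) μ)
    (hweak : ∀ g : Ω → ℝ, MemLp g (ENNReal.ofReal p') μ →
      Tendsto (fun j => ∫ ω, Ψseq j ω * g ω ∂μ) atTop (𝓝 (∫ ω, Ψ ω * g ω ∂μ)))
    (hΦmeas : Measurable Φ) (hΦnn : ∀ ω, 0 ≤ Φ ω)
    (hliminf : ∀ A : Set Ω, MeasurableSet A →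
      ∫⁻ ω in A, ENNReal.ofReal (Φ ω) ∂μ ≤
        liminf (fun j => ∫⁻ ω in A, ENNReal.ofReal (Ψseq j ω) ∂μ) atTop)
    (η : ℕ → Ω → ℝ) (η₀ : Ω → ℝ)
    (hηmeas : ∀ j, Measurable (η j)) (hη₀meas : Measurable η₀)
    (hηbdd : ∀ j, ∀ᵐ ω ∂μ, c ≤ η j ω ∧ η j ω ≤ C)
    (hη₀bdd : ∀ᵐ ω ∂μ, c ≤ η₀ ω ∧ η₀ ω ≤ C)
    (hηunif : TendstoUniformly η η₀ atTop)
    (hΦp : Integrable (fun ω => Φ ω ^ p * η₀ ω) μ)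
    (hnorm : Tendsto (fun j => ∫ ω, Ψseq j ω ^ p * η j ω ∂μ) atTop
      (𝓝 (∫ ω, Φ ω ^ p * η₀ ω ∂μ))) :
    Φ =ᵐ[μ] Ψ ∧
      Tendsto (fun j => eLpNorm (fun ω => Ψseq j ω - Φ ω) (ENNReal.ofReal p) μ)
        atTop (𝓝 0) := by
  have hp0 : (0:ℝ) < p := lt_trans one_pos hp
  have hpq : p.HolderConjugate p' := Real.holderConjugate_iff.2 ⟨hp, by simpa [one_div] using hpp'⟩
  have hp'0 : 0 < p' := hpq.symm.pos
  have hone_le : (1:ℝ≥0∞) ≤ ENNReal.ofReal p := one_le_ofReal.2 hp.le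
  have hq0 : ENNReal.ofReal p ≠ 0 := by simp [hp0, hp0.not_ge, ENNReal.ofReal_eq_zero]
  have hΨsm : ∀ j, AEStronglyMeasurable (Ψseq j) μ := fun j => (hΨmem j).1
  have hΨm : AEStronglyMeasurable Ψ μ := hΨlim.1
  have hΦsm : AEStronglyMeasurable Φ μ := hΦmeas.aestronglyMeasurable
  have hη₀abs : ∀ᵐ ω ∂μ, |η₀ ω| ≤ C := by
    filter_upwards [hη₀bdd] with ω h
    rw [abs_le]; exact ⟨by linarith, h.2⟩
  have hηabs : ∀ j, ∀ᵐ ω ∂μ, |η j ω| ≤ C := by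
    intro j
    filter_upwards [hηbdd j] with ω h
    rw [abs_le]; exact ⟨by linarith, h.2⟩
  -- integrability of p-th powers
  have intΨjp : ∀ j, Integrable (fun ω => Ψseq j ω ^ p) μ := by
    intro j
    refine (integrable_abs_rpow_of_memLp hp0 (hΨmem j)).congr ?_
    filter_upwards [hΨnn j] with ω h using by rw [abs_of_nonneg h]
  have intΦp : Integrable (fun ω => Φ ω ^ p) μ := by
    refine Integrable.mono' (hΦp.const_mul c⁻¹)
      ((hΦmeas.aemeasurable.pow aemeasurable_const).aestronglyMeasurable) ?_
    filter_upwards [hη₀bdd] with ω h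
    rw [Real.norm_eq_abs, abs_of_nonneg (Real.rpow_nonneg (hΦnn ω) p)]
    have hnn : 0 ≤ Φ ω ^ p := Real.rpow_nonneg (hΦnn ω) p
    rw [inv_mul_eq_div, le_div_iff₀ hc]
    calc Φ ω ^ p * c ≤ Φ ω ^ p * η₀ ω := mul_le_mul_of_nonneg_left h.1 hnn
      _ = Φ ω ^ p * η₀ ω * 1 := by ring
      _ ≤ Φ ω ^ p * η₀ ω := le_of_eq (by ring)
  have hΦmem : MemLp Φ (ENNReal.ofReal p) μ := by
    refine memLp_of_integrable_abs_rpow hp0 hΦsm (intΦp.congr ?_)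
    filter_upwards with ω using by rw [abs_of_nonneg (hΦnn ω)]
  have intΦ : Integrable Φ μ := hΦmem.integrable hone_le
  have intΨ : Integrable Ψ μ := hΨlim.integrable hone_le
  have intΨj : ∀ j, Integrable (Ψseq j) μ := fun j => (hΨmem j).integrable hone_le
  have intΨjpη : ∀ j, Integrable (fun ω => Ψseq j ω ^ p * η j ω) μ := fun j =>
    integrable_mul_bdd (intΨjp j) (hηmeas j).aestronglyMeasurable (hηabs j)
  have intΨjpη₀ : ∀ j, Integrable (fun ω => Ψseq j ω ^ p * η₀ ω) μ := fun j =>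
    integrable_mul_bdd (intΨjp j) hη₀meas.aestronglyMeasurable hη₀abs
  -- Step A : Φ ≤ Ψ a.e.
  have hsetTendsto : ∀ A : Set Ω, MeasurableSet A →
      Tendsto (fun j => ∫ ω in A, Ψseq j ω ∂μ) atTop (𝓝 (∫ ω in A, Ψ ω ∂μ)) := by
    intro A hA
    have hmemInd : MemLp (A.indicator (fun _ => (1:ℝ))) (ENNReal.ofReal p') μ := by
      refine MemLp.of_bound ((measurable_const.indicator hA).aestronglyMeasurable) 1 ?_
      filter_upwards with ω
      by_cases h : ω ∈ A <;> simp [h]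
    have h := hweak _ hmemInd
    have e : ∀ f : Ω → ℝ, (∫ ω, f ω * A.indicator (fun _ => (1:ℝ)) ω ∂μ) = ∫ ω in A, f ω ∂μ := by
      intro f
      rw [← integral_indicator hA]
      congr 1
      funext ω
      by_cases hω : ω ∈ A <;> simp [hω]
    rw [e Ψ] at h
    exact Tendsto.congr (fun j => e (Ψseq j)) h
  have hΨnn0 : 0 ≤ᵐ[μ] Ψ := by
    apply ae_nonneg_of_forall_setIntegral_nonneg intΨ
    intro s hs _
    exact ge_of_tendsto (hsetTendsto s hs)
      (Eventually.of_forall fun j => integral_nonneg_of_ae (ae_restrict_of_ae (hΨnn j)))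
  have hΦleΨ : Φ ≤ᵐ[μ] Ψ := by
    have hsub : 0 ≤ᵐ[μ] fun ω => Ψ ω - Φ ω := by
      apply ae_nonneg_of_forall_setIntegral_nonneg (intΨ.sub intΦ)
      intro s hs _
      simp only [Pi.sub_apply]
      rw [integral_sub intΨ.restrict intΦ.restrict, sub_nonneg]
      -- ∫ in s, Φ ≤ ∫ in s, Ψ
      have h1 := hliminf s hs
      have e1 : ∀ j, (∫⁻ ω in s, ENNReal.ofReal (Ψseq j ω) ∂μ)
          = ENNReal.ofReal (∫ ω in s, Ψseq j ω ∂μ) :=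
        fun j => (ofReal_integral_eq_lintegral_ofReal (intΨj j).restrict
          (ae_restrict_of_ae (hΨnn j))).symm
      have e2 : (∫⁻ ω in s, ENNReal.ofReal (Φ ω) ∂μ) = ENNReal.ofReal (∫ ω in s, Φ ω ∂μ) :=
        (ofReal_integral_eq_lintegral_ofReal intΦ.restrict
          (Eventually.of_forall fun ω => hΦnn ω)).symm
      have hlim2 : Tendsto (fun j => ENNReal.ofReal (∫ ω in s, Ψseq j ω ∂μ)) atTop
          (𝓝 (ENNReal.ofReal (∫ ω in s, Ψ ω ∂μ))) :=
        (ENNReal.continuous_ofReal.tendsto _).comp (hsetTendsto s hs)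
      have hliminfeq : liminf (fun j => ∫⁻ ω in s, ENNReal.ofReal (Ψseq j ω) ∂μ) atTop
          = ENNReal.ofReal (∫ ω in s, Ψ ω ∂μ) := by
        simp only [e1]
        exact hlim2.liminf_eq
      rw [e2, hliminfeq] at h1
      exact (ENNReal.ofReal_le_ofReal_iff
        (integral_nonneg_of_ae (ae_restrict_of_ae hΨnn0))).1 h1
    filter_upwards [hsub] with ω h
    simp only [Pi.zero_apply] at h
    linarith
  -- Step B : V j := ∫ Ψ_j^p η₀ tends to E := ∫ Φ^p η₀
  set E : ℝ := ∫ ω, Φ ω ^ p * η₀ ω ∂μ with hEdef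
  have hE0 : 0 ≤ E := by
    refine integral_nonneg_of_ae ?_
    filter_upwards [hη₀bdd] with ω h
    exact mul_nonneg (Real.rpow_nonneg (hΦnn ω) p) (hc.le.trans h.1)
  have hNnn : ∀ j, 0 ≤ ∫ ω, Ψseq j ω ^ p ∂μ := fun j =>
    integral_nonneg_of_ae (by filter_upwards [hΨnn j] with ω h using Real.rpow_nonneg h p)
  obtain ⟨B₀, hB₀⟩ := hnorm.bddAbove_range
  have hNle : ∀ j, ∫ ω, Ψseq j ω ^ p ∂μ ≤ B₀ / c := by
    intro j
    have h1 : c * ∫ ω, Ψseq j ω ^ p ∂μ ≤ ∫ ω, Ψseq j ω ^ p * η j ω ∂μ := by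
      rw [← integral_const_mul]
      refine integral_mono_ae ((intΨjp j).const_mul c) (intΨjpη j) ?_
      filter_upwards [hηbdd j, hΨnn j] with ω h hn
      calc c * Ψseq j ω ^ p = Ψseq j ω ^ p * c := mul_comm _ _
        _ ≤ Ψseq j ω ^ p * η j ω := mul_le_mul_of_nonneg_left h.1 (Real.rpow_nonneg hn p)
    have h2 : (∫ ω, Ψseq j ω ^ p * η j ω ∂μ) ≤ B₀ := hB₀ (Set.mem_range_self j)
    rw [le_div_iff₀ hc, mul_comm]
    linarith
  set B : ℝ := max (B₀ / c) 0 with hBdef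
  have hB : ∀ j, ∫ ω, Ψseq j ω ^ p ∂μ ≤ B := fun j => (hNle j).trans (le_max_left _ _)
  have hB0 : 0 ≤ B := le_max_right _ _
  have hVW0 : Tendsto (fun j => (∫ ω, Ψseq j ω ^ p * η₀ ω ∂μ)
      - ∫ ω, Ψseq j ω ^ p * η j ω ∂μ) atTop (𝓝 0) := by
    rw [Metric.tendsto_nhds]
    intro ε hε
    have hδ : (0:ℝ) < ε / (2 * (B + 1)) := by positivity
    have huni := Metric.tendstoUniformly_iff.1 hηunif (ε / (2 * (B + 1))) hδ
    filter_upwards [huni] with j hj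
    rw [dist_zero_right, Real.norm_eq_abs]
    have e : (∫ ω, Ψseq j ω ^ p * η₀ ω ∂μ) - (∫ ω, Ψseq j ω ^ p * η j ω ∂μ)
        = ∫ ω, Ψseq j ω ^ p * (η₀ ω - η j ω) ∂μ := by
      rw [← integral_sub (intΨjpη₀ j) (intΨjpη j)]
      congr 1; funext ω; ring
    rw [e]
    have hint : Integrable (fun ω => Ψseq j ω ^ p * (η₀ ω - η j ω)) μ :=
      ((intΨjpη₀ j).sub (intΨjpη j)).congr
        (by filter_upwards with ω using by simp only [Pi.sub_apply]; ring)
    have h1 : |∫ ω, Ψseq j ω ^ p * (η₀ ω - η j ω) ∂μ|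
        ≤ ∫ ω, |Ψseq j ω ^ p * (η₀ ω - η j ω)| ∂μ := by
      have := norm_integral_le_integral_norm (fun ω => Ψseq j ω ^ p * (η₀ ω - η j ω)) (μ := μ)
      simpa only [Real.norm_eq_abs] using this
    have h2 : (∫ ω, |Ψseq j ω ^ p * (η₀ ω - η j ω)| ∂μ)
        ≤ ∫ ω, Ψseq j ω ^ p * (ε / (2*(B+1))) ∂μ := by
      refine integral_mono_ae hint.abs ((intΨjp j).mul_const _) ?_
      filter_upwards [hΨnn j] with ω hn
      rw [abs_mul, abs_of_nonneg (Real.rpow_nonneg hn p)]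
      exact mul_le_mul_of_nonneg_left (by rw [← Real.dist_eq]; exact (hj ω).le)
        (Real.rpow_nonneg hn p)
    have h3 : (∫ ω, Ψseq j ω ^ p * (ε / (2*(B+1))) ∂μ)
        = (∫ ω, Ψseq j ω ^ p ∂μ) * (ε / (2*(B+1))) := integral_mul_const _ _
    have h4 : (∫ ω, Ψseq j ω ^ p ∂μ) * (ε / (2*(B+1))) ≤ B * (ε / (2*(B+1))) :=
      mul_le_mul_of_nonneg_right (hB j) hδ.le
    have h5 : B * (ε / (2*(B+1))) < ε := by
      rw [mul_div_assoc', div_lt_iff₀ (by positivity : (0:ℝ) < 2*(B+1))]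
      nlinarith
    linarith
  have hVtend : Tendsto (fun j => ∫ ω, Ψseq j ω ^ p * η₀ ω ∂μ) atTop (𝓝 E) := by
    have h := hVW0.add hnorm
    rw [zero_add] at h
    refine h.congr fun j => ?_
    ring
  -- Step C : Φ = Ψ a.e.
  have intΨp : Integrable (fun ω => Ψ ω ^ p) μ := by
    refine (integrable_abs_rpow_of_memLp hp0 hΨlim).congr ?_
    filter_upwards [hΨnn0] with ω h using by rw [abs_of_nonneg h]
  have intΨpη₀ : Integrable (fun ω => Ψ ω ^ p * η₀ ω) μ :=
    integrable_mul_bdd intΨp hη₀meas.aestronglyMeasurable hη₀abs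
  set F : ℝ := ∫ ω, Ψ ω ^ p * η₀ ω ∂μ with hFdef
  have hF0 : 0 ≤ F := integral_nonneg_of_ae (by
    filter_upwards [hη₀bdd, hΨnn0] with ω h hn
    exact mul_nonneg (Real.rpow_nonneg hn p) (hc.le.trans h.1))
  have hEF : E ≤ F := by
    refine integral_mono_ae hΦp intΨpη₀ ?_
    filter_upwards [hΦleΨ, hη₀bdd, hΨnn0] with ω hle h hn
    exact mul_le_mul_of_nonneg_right (Real.rpow_le_rpow (hΦnn ω) hle hp0.le)
      (hc.le.trans h.1)
  have hFE : F ≤ E := by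
    set g₀ : Ω → ℝ := fun ω => Ψ ω ^ (p - 1) * η₀ ω with hg₀
    have hg₀mem : MemLp g₀ (ENNReal.ofReal p') μ :=
      memLp_rpow_weight hpq hΨm hη₀meas.aestronglyMeasurable hΨnn0 hη₀abs intΨp
    have htest := hweak g₀ hg₀mem
    have hΨg₀ : (∫ ω, Ψ ω * g₀ ω ∂μ) = F := by
      rw [hFdef]
      refine integral_congr_ae ?_
      filter_upwards [hΨnn0] with ω hn
      have hmul : Ψ ω * Ψ ω ^ (p-1) = Ψ ω ^ p := by
        nth_rewrite 1 [← Real.rpow_one (Ψ ω)]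
        rw [← Real.rpow_add' hn (by norm_num [hp0.ne'] : (1:ℝ) + (p-1) ≠ 0)]
        norm_num
      calc Ψ ω * (Ψ ω ^ (p-1) * η₀ ω) = Ψ ω * Ψ ω ^ (p-1) * η₀ ω := by ring
        _ = Ψ ω ^ p * η₀ ω := by rw [hmul]
    have eΨ : ∀ᵐ ω ∂μ, (Ψ ω ^ (p-1)) ^ p' * η₀ ω = Ψ ω ^ p * η₀ ω := by
      filter_upwards [hΨnn0] with ω h
      rw [← Real.rpow_mul h, hpq.sub_one_mul_conj]
    have hHolder : ∀ j, (∫ ω, Ψseq j ω * g₀ ω ∂μ) ≤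
        (∫ ω, Ψseq j ω ^ p * η₀ ω ∂μ) ^ (1/p) * F ^ (1/p') := by
      intro j
      have hwh := weighted_holder (μ := μ) hpq (hΨsm j)
        ((hΨm.aemeasurable.pow aemeasurable_const).aestronglyMeasurable)
        hη₀meas.aestronglyMeasurable (hΨnn j)
        (by filter_upwards [hΨnn0] with ω h using Real.rpow_nonneg h _)
        (by filter_upwards [hη₀bdd] with ω h using hc.le.trans h.1)
        (intΨjpη₀ j) (intΨpη₀.congr (eΨ.mono fun ω h => h.symm))
      have e1 : (∫ ω, Ψseq j ω * g₀ ω ∂μ)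
          = ∫ ω, Ψseq j ω * Ψ ω ^ (p-1) * η₀ ω ∂μ := by
        refine integral_congr_ae ?_
        filter_upwards with ω using by rw [hg₀]; ring
      have e2 : (∫ ω, (Ψ ω ^ (p-1)) ^ p' * η₀ ω ∂μ) = F := by
        rw [hFdef]; exact integral_congr_ae eΨ
      rw [e1, ← e2]
      exact hwh
    have hlimR : Tendsto (fun j => (∫ ω, Ψseq j ω ^ p * η₀ ω ∂μ) ^ (1/p) * F ^ (1/p'))
        atTop (𝓝 (E ^ (1/p) * F ^ (1/p'))) :=
      Tendsto.mul_const _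
        ((Real.continuousAt_rpow_const E (1/p) (Or.inr (by positivity))).tendsto.comp hVtend)
    have hkey : F ≤ E ^ (1/p) * F ^ (1/p') := by
      have hk := le_of_tendsto_of_tendsto' htest hlimR hHolder
      rwa [hΨg₀] at hk
    rcases eq_or_lt_of_le hF0 with h0 | h0
    · rw [← h0]; exact hE0
    · have hFeq : F = F ^ (1/p) * F ^ (1/p') := by
        rw [← Real.rpow_add h0, hpp', Real.rpow_one]
      have h1 : F ^ (1/p) ≤ E ^ (1/p) := by
        have h2 : F ^ (1/p) * F ^ (1/p') ≤ E ^ (1/p) * F ^ (1/p') := by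
          rw [← hFeq]; exact hkey
        exact le_of_mul_le_mul_right h2 (Real.rpow_pos_of_pos h0 _)
      exact (Real.rpow_le_rpow_iff hF0 hE0 (by positivity : (0:ℝ) < 1/p)).1 h1
  have hΦΨae : Φ =ᵐ[μ] Ψ := by
    have hzero : (∫ ω, (Ψ ω ^ p * η₀ ω - Φ ω ^ p * η₀ ω) ∂μ) = 0 := by
      rw [integral_sub intΨpη₀ hΦp, ← hFdef, ← hEdef]
      linarith
    have hnnsub : 0 ≤ᵐ[μ] fun ω => Ψ ω ^ p * η₀ ω - Φ ω ^ p * η₀ ω := by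
      filter_upwards [hΦleΨ, hη₀bdd, hΨnn0] with ω hle h hn
      have := mul_le_mul_of_nonneg_right (Real.rpow_le_rpow (hΦnn ω) hle hp0.le)
        (hc.le.trans h.1)
      simp only [Pi.zero_apply]
      linarith
    have hae := (integral_eq_zero_iff_of_nonneg_ae hnnsub (intΨpη₀.sub hΦp)).1 hzero
    filter_upwards [hae, hΦleΨ, hΨnn0, hη₀bdd] with ω h0 hle hn hbd
    simp only [Pi.zero_apply] at h0
    have hηpos : 0 < η₀ ω := lt_of_lt_of_le hc hbd.1
    have h1 : (Ψ ω ^ p - Φ ω ^ p) * η₀ ω = 0 := by rw [sub_mul]; linarith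
    rcases mul_eq_zero.1 h1 with h | h
    · have h2 : Ψ ω ^ p = Φ ω ^ p := sub_eq_zero.1 h
      have h3 : Ψ ω ≤ Φ ω := (Real.rpow_le_rpow_iff hn (hΦnn ω) hp0).1 (le_of_eq h2)
      exact le_antisymm hle h3
    · exact absurd h hηpos.ne'
  refine ⟨hΦΨae, ?_⟩
  -- Step D : the convexity defect tends to zero
  set g₁ : Ω → ℝ := fun ω => Φ ω ^ (p - 1) * η₀ ω with hg₁
  have hg₁mem : MemLp g₁ (ENNReal.ofReal p') μ :=
    memLp_rpow_weight hpq hΦsm hη₀meas.aestronglyMeasurable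
      (Eventually.of_forall hΦnn) hη₀abs intΦp
  have eΦ : ∀ᵐ ω ∂μ, (Φ ω ^ (p-1)) ^ p' * η₀ ω = Φ ω ^ p * η₀ ω := by
    filter_upwards with ω
    rw [← Real.rpow_mul (hΦnn ω), hpq.sub_one_mul_conj]
  have hΦg₁ : (∫ ω, Φ ω * g₁ ω ∂μ) = E := by
    rw [hEdef]
    refine integral_congr_ae ?_
    filter_upwards with ω
    have hmul : Φ ω * Φ ω ^ (p-1) = Φ ω ^ p := by
      nth_rewrite 1 [← Real.rpow_one (Φ ω)]
      rw [← Real.rpow_add' (hΦnn ω) (by norm_num [hp0.ne'] : (1:ℝ) + (p-1) ≠ 0)]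
      norm_num
    calc Φ ω * (Φ ω ^ (p-1) * η₀ ω) = Φ ω * Φ ω ^ (p-1) * η₀ ω := by ring
      _ = Φ ω ^ p * η₀ ω := by rw [hmul]
  have intΨjg₁ : ∀ j, Integrable (fun ω => Ψseq j ω * g₁ ω) μ := fun j =>
    integrable_mul_memLp hpq (hΨmem j) hg₁mem
  have intΦg₁ : Integrable (fun ω => Φ ω * g₁ ω) μ :=
    integrable_mul_memLp hpq hΦmem hg₁mem
  have htest1 : Tendsto (fun j => ∫ ω, Ψseq j ω * g₁ ω ∂μ) atTop (𝓝 E) := by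
    have h := hweak g₁ hg₁mem
    have e : (∫ ω, Ψ ω * g₁ ω ∂μ) = E := by
      rw [← hΦg₁]
      refine integral_congr_ae ?_
      filter_upwards [hΦΨae] with ω hw
      rw [hw]
    rwa [e] at h
  have intMj : ∀ j, Integrable (fun ω => ((Ψseq j ω + Φ ω)/2) ^ p * η₀ ω) μ := by
    intro j
    refine Integrable.mono' ((((intΨjp j).add intΦp).div_const 2).const_mul C)
      (((((hΨsm j).aemeasurable.add hΦmeas.aemeasurable).div_const 2).pow
        aemeasurable_const).mul hη₀meas.aemeasurable).aestronglyMeasurable ?_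
    filter_upwards [hΨnn j, hη₀abs] with ω hn hb
    have hmid0 : (0:ℝ) ≤ (Ψseq j ω + Φ ω)/2 := div_nonneg (add_nonneg hn (hΦnn ω)) two_pos.le
    rw [Real.norm_eq_abs, abs_mul, abs_of_nonneg (Real.rpow_nonneg hmid0 _)]
    have hmid := rpow_midpoint_le hp hn (hΦnn ω)
    have hnn2 : (0:ℝ) ≤ (Ψseq j ω ^ p + Φ ω ^ p)/2 :=
      div_nonneg (add_nonneg (Real.rpow_nonneg hn p) (Real.rpow_nonneg (hΦnn ω) p)) two_pos.le
    calc ((Ψseq j ω + Φ ω)/2)^p * |η₀ ω| ≤ ((Ψseq j ω ^ p + Φ ω ^ p)/2) * C :=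
        mul_le_mul hmid hb (abs_nonneg _) hnn2
      _ = C * ((Ψseq j ω ^ p + Φ ω ^ p)/2) := mul_comm _ _
  have hU0 : ∀ j, 0 ≤ ∫ ω, ((Ψseq j ω + Φ ω)/2) ^ p * η₀ ω ∂μ := fun j =>
    integral_nonneg_of_ae (by
      filter_upwards [hΨnn j, hη₀bdd] with ω hn hb
      exact mul_nonneg
        (Real.rpow_nonneg (div_nonneg (add_nonneg hn (hΦnn ω)) two_pos.le) _)
        (hc.le.trans hb.1))
  have hA'le : ∀ j, (∫ ω, ((Ψseq j ω + Φ ω)/2) * g₁ ω ∂μ) ≤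
      (∫ ω, ((Ψseq j ω + Φ ω)/2) ^ p * η₀ ω ∂μ) ^ (1/p) * E ^ (1/p') := by
    intro j
    have hwh := weighted_holder (μ := μ) hpq
      ((((hΨsm j).aemeasurable.add hΦmeas.aemeasurable).div_const 2).aestronglyMeasurable)
      ((hΦmeas.aemeasurable.pow aemeasurable_const).aestronglyMeasurable)
      hη₀meas.aestronglyMeasurable
      (by filter_upwards [hΨnn j] with ω hn using div_nonneg (add_nonneg hn (hΦnn ω)) two_pos.le)
      (Eventually.of_forall fun ω => Real.rpow_nonneg (hΦnn ω) _)
      (by filter_upwards [hη₀bdd] with ω h using hc.le.trans h.1)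
      (intMj j) (hΦp.congr (eΦ.mono fun ω h => h.symm))
    have e2 : (∫ ω, (Φ ω ^ (p-1)) ^ p' * η₀ ω ∂μ) = E := by
      rw [hEdef]; exact integral_congr_ae eΦ
    have e1 : (∫ ω, ((Ψseq j ω + Φ ω)/2) * g₁ ω ∂μ)
        = ∫ ω, ((Ψseq j ω + Φ ω)/2) * Φ ω ^ (p-1) * η₀ ω ∂μ := by
      refine integral_congr_ae ?_
      filter_upwards with ω using by rw [hg₁]; ring
    rw [e1, ← e2]
    exact hwh
  have hA'tend : Tendsto (fun j => ∫ ω, ((Ψseq j ω + Φ ω)/2) * g₁ ω ∂μ) atTop (𝓝 E) := by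
    have h2 : Tendsto (fun j => ((∫ ω, Ψseq j ω * g₁ ω ∂μ) + ∫ ω, Φ ω * g₁ ω ∂μ) / 2)
        atTop (𝓝 E) := by
      have h3 := (htest1.add_const (∫ ω, Φ ω * g₁ ω ∂μ)).div_const 2
      rw [show (E + ∫ ω, Φ ω * g₁ ω ∂μ)/2 = E from by rw [hΦg₁, add_self_div_two]] at h3
      exact h3
    refine h2.congr fun j => ?_
    rw [← integral_add (intΨjg₁ j) intΦg₁, ← integral_div]
    refine integral_congr_ae ?_
    filter_upwards with ω using by ring
  set U : ℕ → ℝ := fun j => ∫ ω, ((Ψseq j ω + Φ ω)/2) ^ p * η₀ ω ∂μ with hUdef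
  set V : ℕ → ℝ := fun j => ∫ ω, Ψseq j ω ^ p * η₀ ω ∂μ with hVdef
  set R : ℕ → ℝ := fun j =>
    (max (∫ ω, ((Ψseq j ω + Φ ω)/2) * g₁ ω ∂μ) 0 / E ^ (1/p')) ^ p with hRdef
  have hRleU : ∀ j, R j ≤ U j := by
    intro j
    rcases eq_or_lt_of_le hE0 with hE | hEpos
    · have hz : E ^ (1/p') = 0 := by
        rw [← hE]; exact Real.zero_rpow (ne_of_gt (by positivity))
      have : R j = 0 := by
        show (max (∫ ω, ((Ψseq j ω + Φ ω)/2) * g₁ ω ∂μ) 0 / E ^ (1/p')) ^ p = 0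
        rw [hz, _root_.div_zero, Real.zero_rpow hp0.ne']
      rw [this]; exact hU0 j
    · have hmax : max (∫ ω, ((Ψseq j ω + Φ ω)/2) * g₁ ω ∂μ) 0
          ≤ (U j) ^ (1/p) * E ^ (1/p') :=
        max_le (hA'le j) (mul_nonneg (Real.rpow_nonneg (hU0 j) _) (Real.rpow_nonneg hE0 _))
      have hEp' : 0 < E ^ (1/p') := Real.rpow_pos_of_pos hEpos _
      have h1 : max (∫ ω, ((Ψseq j ω + Φ ω)/2) * g₁ ω ∂μ) 0 / E ^ (1/p') ≤ (U j) ^ (1/p) := by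
        rw [div_le_iff₀ hEp']; exact hmax
      have h2 := Real.rpow_le_rpow (by positivity) h1 hp0.le
      have h3 : ((U j) ^ (1/p)) ^ p = U j := by
        rw [← Real.rpow_mul (hU0 j), one_div, inv_mul_cancel₀ hp0.ne', Real.rpow_one]
      exact h2.trans_eq h3
  have hRtend : Tendsto R atTop (𝓝 E) := by
    rcases eq_or_lt_of_le hE0 with hE | hEpos
    · have hz : E ^ (1/p') = 0 := by
        rw [← hE]; exact Real.zero_rpow (ne_of_gt (by positivity))
      have hR0 : ∀ j, R j = 0 := by
        intro j
        show (max (∫ ω, ((Ψseq j ω + Φ ω)/2) * g₁ ω ∂μ) 0 / E ^ (1/p')) ^ p = 0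
        rw [hz, _root_.div_zero, Real.zero_rpow hp0.ne']
      rw [← hE]
      exact Tendsto.congr (fun j => (hR0 j).symm) tendsto_const_nhds
    · have h1 : Tendsto (fun j => max (∫ ω, ((Ψseq j ω + Φ ω)/2) * g₁ ω ∂μ) 0) atTop
          (𝓝 (max E 0)) := hA'tend.max tendsto_const_nhds
      have h2 := h1.div_const (E ^ (1/p'))
      have h3 := (Real.continuousAt_rpow_const (max E 0 / E ^ (1/p')) p
        (Or.inr hp0.le)).tendsto.comp h2
      have e : (max E 0 / E ^ (1/p')) ^ p = E := by
        rw [max_eq_left hE0]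
        have e1 : E / E ^ (1/p') = E ^ (1 - 1/p') := by
          rw [Real.rpow_sub hEpos, Real.rpow_one]
        have e2 : (1:ℝ) - 1/p' = 1/p := by linarith
        rw [e1, e2, ← Real.rpow_mul hE0, one_div, inv_mul_cancel₀ hp0.ne', Real.rpow_one]
      rw [e] at h3
      exact h3
  have hDtend : Tendsto (fun j => (V j + E)/2 - U j) atTop (𝓝 0) := by
    have hub : ∀ j, (V j + E)/2 - U j ≤ (V j + E)/2 - R j := fun j => by linarith [hRleU j]
    have hlb : ∀ j, 0 ≤ (V j + E)/2 - U j := by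
      intro j
      have e : (∫ ω, ((Ψseq j ω ^ p * η₀ ω + Φ ω ^ p * η₀ ω)/2
          - ((Ψseq j ω + Φ ω)/2) ^ p * η₀ ω) ∂μ) = (V j + E)/2 - U j := by
        have iA : Integrable (fun ω => (Ψseq j ω ^ p * η₀ ω + Φ ω ^ p * η₀ ω)/2) μ := by
          exact ((intΨjpη₀ j).add hΦp).div_const 2
        rw [integral_sub iA (intMj j), integral_div, integral_add (intΨjpη₀ j) hΦp]
      rw [← e]
      refine integral_nonneg_of_ae ?_
      filter_upwards [hΨnn j, hη₀bdd] with ω hn hb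
      have hη0 : (0:ℝ) ≤ η₀ ω := hc.le.trans hb.1
      have hmid := rpow_midpoint_le hp hn (hΦnn ω)
      have h1 := mul_le_mul_of_nonneg_right hmid hη0
      have h2 : ((Ψseq j ω ^ p + Φ ω ^ p)/2) * η₀ ω
          = (Ψseq j ω ^ p * η₀ ω + Φ ω ^ p * η₀ ω)/2 := by ring
      simp only [Pi.zero_apply]
      linarith [h1, h2]
    have hup : Tendsto (fun j => (V j + E)/2 - R j) atTop (𝓝 0) := by
      have h := ((hVtend.add_const E).div_const 2).sub hRtend
      rw [add_self_div_two, sub_self] at h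
      exact h
    exact tendsto_of_tendsto_of_tendsto_of_le_of_le tendsto_const_nhds hup hlb hub
  -- Step E : strong convergence
  have memsub : ∀ j, MemLp (fun ω => Ψseq j ω - Φ ω) (ENNReal.ofReal p) μ := fun j =>
    (hΨmem j).sub hΦmem
  have intSj : ∀ j, Integrable (fun ω => |Ψseq j ω - Φ ω| ^ p) μ := fun j =>
    integrable_abs_rpow_of_memLp hp0 (memsub j)
  have intTj : ∀ j, Integrable (fun ω => |Ψseq j ω - Φ ω| ^ p * η₀ ω) μ := fun j =>
    integrable_mul_bdd (intSj j) hη₀meas.aestronglyMeasurable hη₀abs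
  have hTnn : ∀ j, 0 ≤ ∫ ω, |Ψseq j ω - Φ ω| ^ p * η₀ ω ∂μ := fun j =>
    integral_nonneg_of_ae (by
      filter_upwards [hη₀bdd] with ω hb
      exact mul_nonneg (Real.rpow_nonneg (abs_nonneg _) _) (hc.le.trans hb.1))
  have hTtend : Tendsto (fun j => ∫ ω, |Ψseq j ω - Φ ω| ^ p * η₀ ω ∂μ) atTop (𝓝 0) := by
    rw [Metric.tendsto_nhds]
    intro ε hε
    have hε1 : (0:ℝ) < ε/(2*(E+1)) := by positivity
    obtain ⟨K, hK0, hKineq⟩ := key_pointwise_ineq hp hε1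
    have hmaj : ∀ j, (∫ ω, |Ψseq j ω - Φ ω| ^ p * η₀ ω ∂μ)
        ≤ (ε/(2*(E+1))) * (V j + E) + K * ((V j + E)/2 - U j) := by
      intro j
      have i1 : Integrable (fun ω => Ψseq j ω ^ p * η₀ ω + Φ ω ^ p * η₀ ω) μ :=
        (intΨjpη₀ j).add hΦp
      have i2 : Integrable (fun ω => (Ψseq j ω ^ p * η₀ ω + Φ ω ^ p * η₀ ω)/2
          - ((Ψseq j ω + Φ ω)/2) ^ p * η₀ ω) μ := (i1.div_const 2).sub (intMj j)
      have e1 : (ε/(2*(E+1))) * (V j + E) + K * ((V j + E)/2 - U j)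
          = ∫ ω, ((ε/(2*(E+1))) * (Ψseq j ω ^ p * η₀ ω + Φ ω ^ p * η₀ ω)
            + K * ((Ψseq j ω ^ p * η₀ ω + Φ ω ^ p * η₀ ω)/2
              - ((Ψseq j ω + Φ ω)/2) ^ p * η₀ ω)) ∂μ := by
        rw [integral_add (i1.const_mul _) (i2.const_mul _), integral_const_mul,
          integral_const_mul, integral_sub (i1.div_const 2) (intMj j), integral_div,
          integral_add (intΨjpη₀ j) hΦp]
      rw [e1]
      refine integral_mono_ae (intTj j) ((i1.const_mul _).add (i2.const_mul _)) ?_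
      filter_upwards [hΨnn j, hη₀bdd] with ω hn hb
      have hη0 : (0:ℝ) ≤ η₀ ω := hc.le.trans hb.1
      have hk := hKineq (Ψseq j ω) (Φ ω) hn (hΦnn ω)
      have hkη := mul_le_mul_of_nonneg_right hk hη0
      calc |Ψseq j ω - Φ ω| ^ p * η₀ ω
          ≤ ((ε/(2*(E+1))) * (Ψseq j ω ^ p + Φ ω ^ p)
            + K * ((Ψseq j ω ^ p + Φ ω ^ p)/2 - ((Ψseq j ω + Φ ω)/2) ^ p)) * η₀ ω := hkη
        _ = (ε/(2*(E+1))) * (Ψseq j ω ^ p * η₀ ω + Φ ω ^ p * η₀ ω)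
            + K * ((Ψseq j ω ^ p * η₀ ω + Φ ω ^ p * η₀ ω)/2
              - ((Ψseq j ω + Φ ω)/2) ^ p * η₀ ω) := by ring
    have hmajtend : Tendsto (fun j => (ε/(2*(E+1))) * (V j + E) + K * ((V j + E)/2 - U j))
        atTop (𝓝 ((ε/(2*(E+1))) * (E+E) + K * 0)) :=
      (((hVtend.add_const E).const_mul _)).add (hDtend.const_mul K)
    have hlim_lt : (ε/(2*(E+1))) * (E+E) + K * 0 < ε := by
      rw [mul_zero, add_zero, div_mul_eq_mul_div, div_lt_iff₀ (by positivity : (0:ℝ) < 2*(E+1))]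
      nlinarith
    have hev := hmajtend.eventually_lt_const hlim_lt
    filter_upwards [hev] with j hj
    rw [dist_zero_right, Real.norm_eq_abs, abs_of_nonneg (hTnn j)]
    exact lt_of_le_of_lt (hmaj j) hj
  have hStend : Tendsto (fun j => ∫ ω, |Ψseq j ω - Φ ω| ^ p ∂μ) atTop (𝓝 0) := by
    have hb : ∀ j, (∫ ω, |Ψseq j ω - Φ ω| ^ p ∂μ)
        ≤ (∫ ω, |Ψseq j ω - Φ ω| ^ p * η₀ ω ∂μ)/c := by
      intro j
      rw [le_div_iff₀ hc]
      have e : (∫ ω, |Ψseq j ω - Φ ω| ^ p ∂μ) * c = ∫ ω, |Ψseq j ω - Φ ω| ^ p * c ∂μ :=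
        (integral_mul_const _ _).symm
      rw [e]
      refine integral_mono_ae ((intSj j).mul_const c) (intTj j) ?_
      filter_upwards [hη₀bdd] with ω h
      exact mul_le_mul_of_nonneg_left h.1 (Real.rpow_nonneg (abs_nonneg _) _)
    have hdiv := hTtend.div_const c
    rw [zero_div] at hdiv
    exact squeeze_zero (fun j => integral_nonneg fun ω => Real.rpow_nonneg (abs_nonneg _) _)
      hb hdiv
  have hfinal : Tendsto (fun j => ENNReal.ofReal ((∫ ω, |Ψseq j ω - Φ ω| ^ p ∂μ) ^ p⁻¹))
      atTop (𝓝 0) := by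
    have h1 : Tendsto (fun j => (∫ ω, |Ψseq j ω - Φ ω| ^ p ∂μ) ^ p⁻¹) atTop (𝓝 0) := by
      have h2 := (Real.continuousAt_rpow_const 0 p⁻¹
        (Or.inr (by positivity))).tendsto.comp hStend
      simpa [Function.comp_def, Real.zero_rpow (inv_ne_zero hp0.ne')] using h2
    have h3 := (ENNReal.continuous_ofReal.tendsto 0).comp h1
    simpa [Function.comp_def] using h3
  refine hfinal.congr fun j => ?_
  rw [(memsub j).eLpNorm_eq_integral_rpow_norm hq0 ofReal_ne_top]
  simp [ENNReal.toReal_ofReal hp0.le, Real.norm_eq_abs]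
end
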